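/- arXiv:0902.2810 — 6 statements merged into one kernel-verified Lean document; each statement's English description precedes it below -/
import Mathlib

section
/- Let G be a finitely generated residually finite group. Then the automorphism group Aut(G) is residually finite. -/
open Subgroup Equiv

/-- `Equiv.permCongr` as a `MulEquiv`. -/
def permCongrMulEquiv {α β : Type*} (e : α ≃ β) : Perm α ≃* Perm β where
  toEquiv := e.permCongr
  map_mul' p q := by
    ext x
    simp [Equiv.permCongr_apply, Equiv.Perm.mul_apply]

/-- A finitely generated group has finitely many homomorphisms into a finite group. -/
lemma finite_homs_of_fg {G P : Type*} [Group G] [Group P] [Finite P] (hfg : Group.FG G) :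
    Finite (G →* P) := by
  obtain ⟨S, hS⟩ := hfg.out
  refine Finite.of_injective (fun f => (fun s : S => f s)) ?_
  intro f g h
  refine MonoidHom.eq_of_eqOn_dense hS ?_
  intro x hx
  exact congrFun h ⟨x, hx⟩

/-- If `G` is a finitely generated residually finite group, then `Aut(G)`
is residually finite. -/
theorem aut_residuallyFinite (G : Type*) [Group G] (hfg : Group.FG G)
    (hrf : ∀ g : G, g ≠ 1 → ∃ N : Subgroup G, N.Normal ∧ N.FiniteIndex ∧ g ∉ N) :
    ∀ φ : MulAut G, φ ≠ 1 →
      ∃ N : Subgroup (MulAut G), N.Normal ∧ N.FiniteIndex ∧ φ ∉ N := by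
  intro φ hφ
  obtain ⟨g, hg⟩ : ∃ g : G, φ g ≠ g := by
    by_contra h
    push_neg at h
    exact hφ (MulEquiv.ext h)
  have hne : φ g * g⁻¹ ≠ 1 := fun h => hg (mul_inv_eq_one.mp h)
  obtain ⟨N, hNnorm, hNfin, hgN⟩ := hrf _ hne
  haveI := hNnorm
  haveI := hNfin
  set n := N.index with hn
  haveI : Finite (G ⧸ N) := Subgroup.finite_quotient_of_finiteIndex (H := N)
  -- the Cayley-type homomorphism with kernel contained in N
  let e : (G ⧸ N) ≃ Fin n := Finite.equivFinOfCardEq rfl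
  let f₀ : G →* Perm (Fin n) :=
    (permCongrMulEquiv e).toMonoidHom.comp
      ((MulAction.toPermHom (G ⧸ N) (G ⧸ N)).comp (QuotientGroup.mk' N))
  have hker₀ : f₀.ker ≤ N := by
    intro x hx
    have hx' : (permCongrMulEquiv e) ((MulAction.toPermHom (G ⧸ N) (G ⧸ N)) (x : G ⧸ N)) = 1 := hx
    have h1 : (MulAction.toPermHom (G ⧸ N) (G ⧸ N)) (x : G ⧸ N) = 1 :=
      (permCongrMulEquiv e).injective (hx'.trans (map_one _).symm)
    have h2 : (x : G ⧸ N) • (1 : G ⧸ N) = 1 := by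
      have := congrArg (fun p : Perm (G ⧸ N) => p 1) h1
      simpa using this
    rw [smul_eq_mul, mul_one] at h2
    exact (QuotientGroup.eq_one_iff x).mp h2
  -- the characteristic finite-index subgroup M
  haveI : Finite (G →* Perm (Fin n)) := finite_homs_of_fg hfg
  set M : Subgroup G := ⨅ f : G →* Perm (Fin n), f.ker with hM
  have hmemM : ∀ x, x ∈ M ↔ ∀ f : G →* Perm (Fin n), f x = 1 := by
    intro x
    simp [hM, Subgroup.mem_iInf, MonoidHom.mem_ker]
  haveI hMnorm : M.Normal := by
    constructor
    intro x hx c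
    rw [hmemM] at hx ⊢
    intro f
    simp [map_mul, hx f]
  haveI hMfin : M.FiniteIndex := Subgroup.finiteIndex_iInf fun f => by
    constructor
    rw [Subgroup.index_ker]
    exact Nat.card_ne_zero.mpr ⟨⟨1, one_mem _⟩, inferInstance⟩
  have hMN : M ≤ N := le_trans (iInf_le _ f₀) hker₀
  -- M is characteristic
  have hstab : ∀ (σ : MulAut G) (x : G), x ∈ M → σ x ∈ M := by
    intro σ x hx
    rw [hmemM] at hx ⊢
    intro f
    exact hx (f.comp σ.toMonoidHom)
  have hchar : ∀ σ : MulAut G, M.map σ.toMonoidHom = M := by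
    intro σ
    refine le_antisymm ?_ ?_
    · rintro _ ⟨y, hy, rfl⟩
      exact hstab σ y hy
    · intro x hx
      exact ⟨σ⁻¹ x, hstab σ⁻¹ x hx, σ.apply_symm_apply x⟩
  -- the homomorphism Aut(G) → Aut(G/M)
  let Φ : MulAut G →* MulAut (G ⧸ M) :=
    { toFun := fun σ => QuotientGroup.congr M M σ (hchar σ)
      map_one' := by
        refine MulEquiv.ext fun q => ?_
        induction q using QuotientGroup.induction_on with
        | H x => rfl
      map_mul' := fun σ τ => by
        refine MulEquiv.ext fun q => ?_
        induction q using QuotientGroup.induction_on with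
        | H x => rfl }
  haveI : Finite (G ⧸ M) := Subgroup.finite_quotient_of_finiteIndex (H := M)
  haveI : Finite (MulAut (G ⧸ M)) :=
    Finite.of_injective (fun e : MulAut (G ⧸ M) => (e : (G ⧸ M) → (G ⧸ M)))
      DFunLike.coe_injective
  refine ⟨Φ.ker, MonoidHom.normal_ker Φ, ?_, ?_⟩
  · constructor
    rw [Subgroup.index_ker]
    exact Nat.card_ne_zero.mpr ⟨⟨1, one_mem _⟩, inferInstance⟩
  · intro hφK
    have h1 : Φ φ = 1 := hφK
    have h2 : (Φ φ) ((g : G ⧸ M)) = (g : G ⧸ M) := by rw [h1]; rfl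
    have h3 : ((φ g : G) : G ⧸ M) = (g : G ⧸ M) := h2
    have h4 : (φ g)⁻¹ * g ∈ M := QuotientGroup.eq.mp h3
    have h5 : (φ g)⁻¹ * g ∈ N := hMN h4
    have h6 : g⁻¹ * φ g ∈ N := by
      have := N.inv_mem h5
      simpa using this
    have h7 : g * (g⁻¹ * φ g) * g⁻¹ ∈ N := hNnorm.conj_mem _ h6 g
    apply hgN
    simpa [mul_assoc] using h7
end

section
/- Let F be a free group of finite rank d ≥ 2 and let K be a normal subgroup of finite index in F, with quotient Γ = F/K. Then the action of Γ on the abelianization K^{ab} = K/[K,K] induced by conjugation in F is faithful: for every γ ∈ Γ with γ ≠ 1 there exists x ∈ K such that the image of γ·x·γ⁻¹ and the image of x in K^{ab} differ. -/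
noncomputable section

open Subgroup

open scoped commutatorElement

/-- Translation action of a group `C` on functions `C → Multiplicative ℤ`. -/
def transHom (C : Type*) [Group C] : C →* MulAut (C → Multiplicative ℤ) where
  toFun c :=
    { toFun := fun f x => f (c⁻¹ * x)
      invFun := fun f x => f (c * x)
      left_inv := fun f => funext fun x => by simp
      right_inv := fun f => funext fun x => by simp
      map_mul' := fun f g => rfl }
  map_one' := by ext f x; simp
  map_mul' c d := by ext f x; simp [mul_assoc]

private def Amat : Matrix.SpecialLinearGroup (Fin 2) ℤ :=
  ⟨!![1, 1; 0, 1], by simp [Matrix.det_fin_two_of]⟩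

private def Bmat : Matrix.SpecialLinearGroup (Fin 2) ℤ :=
  ⟨!![1, 0; 1, 1], by simp [Matrix.det_fin_two_of]⟩

private lemma Amat_pow (n : ℕ) : ((Amat ^ n : Matrix.SpecialLinearGroup (Fin 2) ℤ) :
    Matrix (Fin 2) (Fin 2) ℤ) = !![1, (n : ℤ); 0, 1] := by
  induction n with
  | zero => simp [Matrix.one_fin_two]
  | succ n ih =>
    rw [pow_succ, Matrix.SpecialLinearGroup.coe_mul, ih]
    show _ * (Amat : Matrix (Fin 2) (Fin 2) ℤ) = _
    rw [Amat]
    rw [Matrix.mul_fin_two]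
    norm_num [add_comm]

private lemma Bmat_pow (n : ℕ) : ((Bmat ^ n : Matrix.SpecialLinearGroup (Fin 2) ℤ) :
    Matrix (Fin 2) (Fin 2) ℤ) = !![1, 0; (n : ℤ), 1] := by
  induction n with
  | zero => simp [Matrix.one_fin_two]
  | succ n ih =>
    rw [pow_succ, Matrix.SpecialLinearGroup.coe_mul, ih]
    show _ * (Bmat : Matrix (Fin 2) (Fin 2) ℤ) = _
    rw [Bmat]
    rw [Matrix.mul_fin_two]
    norm_num

private lemma sl2_noncomm (n : ℕ) (hn : n ≠ 0) :
    ¬ Commute (Amat ^ n) (Bmat ^ n) := by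
  intro h
  have h2 := congrArg (fun M : Matrix.SpecialLinearGroup (Fin 2) ℤ =>
    (M : Matrix (Fin 2) (Fin 2) ℤ)) h
  simp only [Matrix.SpecialLinearGroup.coe_mul, Amat_pow, Bmat_pow, Matrix.mul_fin_two] at h2
  have h3 := congrFun (congrFun h2 0) 0
  norm_num [Matrix.of_apply] at h3
  exact hn h3

/-- Core lemma: in a nonabelian free group `H`, if `N` is a proper normal subgroup with
`[H,H] ≤ [N,N]`, we get a contradiction. -/
private lemma core {H : Type*} [Group H] [IsFreeGroup H] (N : Subgroup H) [hNn : N.Normal]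
    (hd : ∀ x y : H, ⁅x, y⁆ ∈ (⁅N, N⁆ : Subgroup H)) (hNtop : N ≠ ⊤)
    {u v : H} (huv : ¬ Commute u v) : False := by
  classical
  let C := H ⧸ N
  let χ : H →* C := QuotientGroup.mk' N
  have hχ : ∀ h : H, χ h = 1 ↔ h ∈ N := fun h => QuotientGroup.eq_one_iff h
  -- a generator with nontrivial image in H/N
  obtain ⟨s₀, hs₀⟩ : ∃ s : IsFreeGroup.Generators H, χ (IsFreeGroup.of s) ≠ 1 := by
    by_contra hall
    push_neg at hall
    have hχ1 : χ = 1 := IsFreeGroup.ext_hom fun a => by simp [hall a]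
    apply hNtop
    ext h
    simp only [Subgroup.mem_top, iff_true]
    have : χ h = 1 := by rw [hχ1]; rfl
    exact (hχ h).mp this
  -- a second generator
  obtain ⟨s₁, hs₁⟩ : ∃ s : IsFreeGroup.Generators H, s ≠ s₀ := by
    by_contra hall
    push_neg at hall
    -- then H is abelian, contradicting huv
    have hpow : ∀ h : H, ∃ k : ℤ, h = (IsFreeGroup.of s₀) ^ k := by
      intro h
      obtain ⟨w, rfl⟩ := (IsFreeGroup.mulEquiv H).surjective h
      induction w using FreeGroup.induction_on with
      | C1 => exact ⟨0, by simp⟩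
      | of x =>
        refine ⟨1, ?_⟩
        rw [zpow_one]
        have : x = s₀ := hall x
        subst this
        rfl
      | inv_of x ih =>
        obtain ⟨k, hk⟩ := ih
        exact ⟨-k, by rw [map_inv, hk, zpow_neg]⟩
      | mul x y ihx ihy =>
        obtain ⟨k, hk⟩ := ihx
        obtain ⟨l, hl⟩ := ihy
        exact ⟨k + l, by rw [map_mul, hk, hl, zpow_add]⟩
    obtain ⟨a, ha⟩ := hpow u
    obtain ⟨b, hb⟩ := hpow v
    rw [ha, hb] at huv
    exact huv ((Commute.refl _).zpow_zpow a b)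
  -- the wreath-like representation
  let M := C → Multiplicative ℤ
  let φT : C →* MulAut M := transHom C
  let δ : M := Pi.mulSingle (1 : C) (Multiplicative.ofAdd 1)
  let ρ : H →* (M ⋊[φT] C) :=
    IsFreeGroup.lift fun s =>
      ⟨if s = s₁ then δ else 1, χ (IsFreeGroup.of s)⟩
  have hright : ∀ h : H, (ρ h).right = χ h := by
    have : SemidirectProduct.rightHom.comp ρ = χ := IsFreeGroup.ext_hom fun a => by
      simp [ρ, SemidirectProduct.rightHom]
    intro h
    exact DFunLike.congr_fun this h
  -- the homomorphism N → M given by the left component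
  let Lhom : N →* M :=
    { toFun := fun p => (ρ (p : H)).left
      map_one' := by simp
      map_mul' := fun p q => by
        have h1 : χ (p : H) = 1 := (hχ _).mpr p.2
        show (ρ ((p : H) * (q : H))).left = _
        rw [map_mul, SemidirectProduct.mul_left, hright, h1, map_one]
        simp }
  have hker : ∀ w : H, w ∈ (⁅N, N⁆ : Subgroup H) → (ρ w).left = 1 := by
    have hle : (⁅N, N⁆ : Subgroup H) ≤ Lhom.ker.map N.subtype := by
      rw [Subgroup.commutator_le]
      intro a ha b hb
      have hmem : ⁅(⟨a, ha⟩ : N), (⟨b, hb⟩ : N)⁆ ∈ Lhom.ker := by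
        rw [MonoidHom.mem_ker, map_commutatorElement]
        exact commutatorElement_eq_one_iff_commute.mpr (Commute.all _ _)
      exact ⟨⁅(⟨a, ha⟩ : N), (⟨b, hb⟩ : N)⁆, hmem, rfl⟩
    intro w hw
    obtain ⟨x, hx, hxe⟩ := hle hw
    have : (x : H) = w := hxe
    rw [← this]
    exact hx
  -- the contradiction
  set c : H := ⁅IsFreeGroup.of s₀, IsFreeGroup.of s₁⁆ with hc_def
  have hcN : c ∈ N := by
    have : (⁅N, N⁆ : Subgroup H) ≤ N := Subgroup.commutator_le.mpr fun x hx y hy => by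
      simpa [commutatorElement_def] using
        mul_mem (mul_mem (mul_mem hx hy) (inv_mem hx)) (inv_mem hy)
    exact this (hd _ _)
  have hcleft : (ρ c).left = 1 := hker c (hd _ _)
  set a : C := χ (IsFreeGroup.of s₀) with ha_def
  set b : C := χ (IsFreeGroup.of s₁) with hb_def
  have hq : a * b * a⁻¹ * b⁻¹ = 1 := by
    have : χ c = 1 := (hχ c).mpr hcN
    rw [hc_def, map_commutatorElement] at this
    simpa [commutatorElement_def] using this
  have hρ0 : ρ (IsFreeGroup.of s₀) = ⟨1, a⟩ := by
    rw [ha_def]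
    show IsFreeGroup.lift _ (IsFreeGroup.of s₀) = _
    rw [IsFreeGroup.lift_of]
    rw [if_neg (fun h => hs₁ h.symm)]
  have hρ1 : ρ (IsFreeGroup.of s₁) = ⟨δ, b⟩ := by
    rw [hb_def]
    show IsFreeGroup.lift _ (IsFreeGroup.of s₁) = _
    rw [IsFreeGroup.lift_of, if_pos rfl]
  rw [hc_def, map_commutatorElement, hρ0, hρ1] at hcleft
  simp only [commutatorElement_def, SemidirectProduct.mul_left, SemidirectProduct.mul_right,
    SemidirectProduct.inv_left, SemidirectProduct.inv_right, map_one, map_mul, map_inv,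
    one_mul, mul_one, MulAut.one_apply] at hcleft
  -- now evaluate at the point a
  have h1 : (φT a * φT b * (φT a)⁻¹) ((φT b)⁻¹ δ) = φT (a * b * a⁻¹ * b⁻¹) δ := by
    rw [← map_inv φT a, ← map_inv φT b, ← map_mul, ← map_mul, ← MulAut.mul_apply, ← map_mul]
  simp only [inv_one, map_one, mul_one] at hcleft
  have h2 : (φT a) δ = δ :=
    (mul_inv_eq_one.mp hcleft).trans (h1.trans (by rw [hq, map_one, MulAut.one_apply]))
  have h3 := congrFun h2 a
  have hL : (φT a) δ a = Multiplicative.ofAdd 1 := by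
    show δ (a⁻¹ * a) = _
    rw [inv_mul_cancel]
    simp [δ]
  have hR : δ a = 1 := Pi.mulSingle_eq_of_ne hs₀ _
  rw [hL, hR] at h3
  simp at h3

set_option maxHeartbeats 1000000 in
/-- If `K` is a finite-index normal subgroup of a free group `F` of rank
`d ≥ 2`, the conjugation action of `Γ = F/K` on the abelianization `K/[K,K]` is
faithful: any `γ ∈ F` not in `K` (i.e. nontrivial in `Γ`) moves the image in `K^{ab}`
of some `x ∈ K`, which is expressed by `γ·x·γ⁻¹·x⁻¹ ∉ [K,K]`. -/
theorem conjugation_action_on_abelianization_faithful (d : ℕ) (hd : 2 ≤ d)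
    (K : Subgroup (FreeGroup (Fin d))) (hN : K.Normal) (hFI : K.FiniteIndex) :
    ∀ γ : FreeGroup (Fin d), γ ∉ K →
      ∃ x ∈ K, γ * x * γ⁻¹ * x⁻¹ ∉ (⁅K, K⁆ : Subgroup (FreeGroup (Fin d))) := by
  haveI := hN
  haveI := hFI
  intro γ hγ
  by_contra hcon
  push_neg at hcon
  set D : Subgroup (FreeGroup (Fin d)) := ⁅K, K⁆ with hD_def
  haveI : D.Normal := Subgroup.commutator_normal K K
  set H : Subgroup (FreeGroup (Fin d)) := Subgroup.closure ((K : Set (FreeGroup (Fin d))) ∪ {γ}) with hH_def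
  have hKH : K ≤ H := fun x hx => Subgroup.subset_closure (Or.inl hx)
  have hγH : γ ∈ H := Subgroup.subset_closure (Or.inr rfl)
  -- image of H in G/D is abelian
  have key : ∀ a ∈ H, ∀ b ∈ H, ⁅a, b⁆ ∈ D := by
    intro a ha b hb
    let π : FreeGroup (Fin d) →* FreeGroup (Fin d) ⧸ D := QuotientGroup.mk' D
    have base : ∀ x ∈ (K : Set (FreeGroup (Fin d))) ∪ {γ}, ∀ y ∈ (K : Set (FreeGroup (Fin d))) ∪ {γ},
        Commute (π x) (π y) := by
      rintro x (hx | hx) y (hy | hy)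
      · apply commutatorElement_eq_one_iff_commute.mp
        rw [← map_commutatorElement]
        exact (QuotientGroup.eq_one_iff _).mpr (Subgroup.commutator_mem_commutator hx hy)
      · rw [Set.mem_singleton_iff] at hy; subst hy
        apply Commute.symm
        apply commutatorElement_eq_one_iff_commute.mp
        rw [← map_commutatorElement]
        exact (QuotientGroup.eq_one_iff _).mpr
          (by simpa [commutatorElement_def] using hcon x hx)
      · rw [Set.mem_singleton_iff] at hx; subst hx
        apply commutatorElement_eq_one_iff_commute.mp
        rw [← map_commutatorElement]
        exact (QuotientGroup.eq_one_iff _).mpr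
          (by simpa [commutatorElement_def] using hcon y hy)
      · rw [Set.mem_singleton_iff] at hx hy; subst hx; subst hy
        exact Commute.refl _
    have hcomm : Commute (π a) (π b) := by
      rw [hH_def] at ha hb
      induction ha, hb using Subgroup.closure_induction₂ with
      | mem x y hx hy => exact base x hx y hy
      | one_left x hx => simp
      | one_right x hx => simp
      | mul_left x y z hx hy hz h1 h2 => rw [map_mul]; exact h1.mul_left h2
      | mul_right y z x hy hz hx h1 h2 => rw [map_mul]; exact h1.mul_right h2
      | inv_left x y hx hy h => rw [map_inv]; exact h.inv_left
      | inv_right x y hx hy h => rw [map_inv]; exact h.inv_right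
    have : π ⁅a, b⁆ = 1 := by
      rw [map_commutatorElement]
      exact commutatorElement_eq_one_iff_commute.mpr hcomm
    exact (QuotientGroup.eq_one_iff _).mp this
  -- two noncommuting elements of K
  let i0 : Fin d := ⟨0, by omega⟩
  let i1 : Fin d := ⟨1, by omega⟩
  have hi01 : i1 ≠ i0 := by simp [i0, i1, Fin.ext_iff]
  let f : Fin d → Matrix.SpecialLinearGroup (Fin 2) ℤ :=
    fun i => if i = i0 then Amat else if i = i1 then Bmat else 1
  let φ : FreeGroup (Fin d) →* Matrix.SpecialLinearGroup (Fin 2) ℤ := FreeGroup.lift f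
  set n := K.index with hn_def
  have hn : n ≠ 0 := hFI.index_ne_zero
  set u : FreeGroup (Fin d) := (FreeGroup.of i0) ^ n with hu_def
  set v : FreeGroup (Fin d) := (FreeGroup.of i1) ^ n with hv_def
  have hu : u ∈ K := K.pow_index_mem _
  have hv : v ∈ K := K.pow_index_mem _
  have huv : ¬ Commute u v := by
    intro h
    have h2 : Commute (φ u) (φ v) := h.map φ
    rw [hu_def, hv_def, map_pow, map_pow] at h2
    have e0 : φ (FreeGroup.of i0) = Amat := by
      show FreeGroup.lift f (FreeGroup.of i0) = Amat
      rw [FreeGroup.lift_apply_of]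
      simp [f]
    have e1 : φ (FreeGroup.of i1) = Bmat := by
      show FreeGroup.lift f (FreeGroup.of i1) = Bmat
      rw [FreeGroup.lift_apply_of]
      simp [f, hi01]
    rw [e0, e1] at h2
    exact sl2_noncomm n hn h2
  -- apply the core lemma
  let N : Subgroup H := K.subgroupOf H
  haveI : N.Normal := hN.subgroupOf H
  refine core (H := ↥H) N ?_ ?_ (u := ⟨u, hKH hu⟩) (v := ⟨v, hKH hv⟩) ?_
  · intro x y
    have h1 : (↑(⁅x, y⁆ : H) : FreeGroup (Fin d)) ∈ D := by
      have : (↑(⁅x, y⁆ : H) : FreeGroup (Fin d)) = ⁅(x : FreeGroup (Fin d)), (y : FreeGroup (Fin d))⁆ := by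
        simp [commutatorElement_def]
      rw [this]
      exact key _ x.2 _ y.2
    have h2 : D = Subgroup.map H.subtype ⁅N, N⁆ := by
      rw [Subgroup.map_commutator, Subgroup.subgroupOf_map_subtype, inf_eq_left.mpr hKH]
    rw [h2] at h1
    obtain ⟨w, hw, hwe⟩ := h1
    have : w = ⁅x, y⁆ := Subtype.coe_injective hwe
    rwa [this] at hw
  · intro htop
    apply hγ
    have : (⟨γ, hγH⟩ : H) ∈ N := htop ▸ Subgroup.mem_top _
    exact Subgroup.mem_subgroupOf.mp this
  · intro h
    exact huv (Subtype.ext_iff.mp h)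
end
end

section
/- Let F be a free group of finite rank d ≥ 2, let K be a characteristic subgroup of finite index in F with quotient Γ = F/K, and let ψ be an automorphism of F. If the automorphism of Γ induced by ψ is nontrivial, then the automorphism of the abelianization K^{ab} = K/[K,K] induced by the restriction of ψ to K is nontrivial. -/
open Subgroup
open scoped Classical

section Magnus

variable {d : ℕ} (K : Subgroup (FreeGroup (Fin d))) [K.Normal]

noncomputable def qk : FreeGroup (Fin d) →* FreeGroup (Fin d) ⧸ K := QuotientGroup.mk' K

/-- The module `ℚ[Γ]^d`, as functions. -/
abbrev VV (d : ℕ) (K : Subgroup (FreeGroup (Fin d))) : Type _ :=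
  ((FreeGroup (Fin d) ⧸ K) × Fin d) → ℚ

/-- right-translation action of `Γ` on `V`. -/
def rho (γ : FreeGroup (Fin d) ⧸ K) (f : VV d K) : VV d K := fun p => f (p.1 * γ, p.2)

@[simp] lemma rho_rho (γ δ : FreeGroup (Fin d) ⧸ K) (f : VV d K) :
    rho K γ (rho K δ f) = rho K (γ * δ) f := by
  funext p; simp [rho, mul_assoc]

@[simp] lemma rho_one (f : VV d K) : rho K 1 f = f := by funext p; simp [rho]

@[simp] lemma rho_add (γ : FreeGroup (Fin d) ⧸ K) (f g : VV d K) :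
    rho K γ (f + g) = rho K γ f + rho K γ g := rfl

@[simp] lemma rho_zero (γ : FreeGroup (Fin d) ⧸ K) : rho K γ (0 : VV d K) = 0 := rfl

@[simp] lemma rho_neg (γ : FreeGroup (Fin d) ⧸ K) (f : VV d K) :
    rho K γ (-f) = -(rho K γ f) := rfl

@[simp] lemma rho_sub (γ : FreeGroup (Fin d) ⧸ K) (f g : VV d K) :
    rho K γ (f - g) = rho K γ f - rho K γ g := rfl

@[simp] lemma rho_smul (γ : FreeGroup (Fin d) ⧸ K) (a : ℚ) (f : VV d K) :
    rho K γ (a • f) = a • rho K γ f := rfl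

open Classical in
/-- indicator basis vector -/
noncomputable def sing (p : (FreeGroup (Fin d) ⧸ K) × Fin d) : VV d K :=
  fun p' => if p' = p then 1 else 0

/-- affine permutation `v ↦ rho γ v + t`. -/
noncomputable def aff (γ : FreeGroup (Fin d) ⧸ K) (t : VV d K) : Equiv.Perm (VV d K) where
  toFun v := rho K γ v + t
  invFun v := rho K γ⁻¹ (v - t)
  left_inv v := by simp
  right_inv v := by simp

lemma aff_apply (γ : FreeGroup (Fin d) ⧸ K) (t : VV d K) (v : VV d K) :
    aff K γ t v = rho K γ v + t := rfl

lemma aff_symm_apply (γ : FreeGroup (Fin d) ⧸ K) (t : VV d K) (v : VV d K) :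
    (aff K γ t).symm v = rho K γ⁻¹ (v - t) := rfl

/-- The Magnus / Fox-derivative homomorphism into affine transformations. -/
noncomputable def magnus : FreeGroup (Fin d) →* Equiv.Perm (VV d K) :=
  FreeGroup.lift (fun i => aff K (qk K (FreeGroup.of i)) (sing K (1, i)))

lemma magnus_of (i : Fin d) :
    magnus K (FreeGroup.of i) = aff K (qk K (FreeGroup.of i)) (sing K (1, i)) :=
  FreeGroup.lift_apply_of

/-- The Fox derivative vector of `g`. -/
noncomputable def DD (g : FreeGroup (Fin d)) : VV d K := magnus K g 0

lemma magnus_apply (g : FreeGroup (Fin d)) (v : VV d K) :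
    magnus K g v = rho K (qk K g) v + DD K g := by
  suffices main : ∀ g : FreeGroup (Fin d), ∀ v, magnus K g v = rho K (qk K g) v + magnus K g 0 from
    main g v
  intro g
  induction g with
  | C1 => intro v; simp
  | of i =>
      intro v
      have hp : (pure i : FreeGroup (Fin d)) = FreeGroup.of i := rfl
      rw [magnus_of, aff_apply, aff_apply, rho_zero, zero_add]
  | inv_of i ih =>
      intro v
      have hp : (pure i : FreeGroup (Fin d)) = FreeGroup.of i := rfl
      rw [map_inv, map_inv]
      have hinv : (magnus K (FreeGroup.of i))⁻¹ = (magnus K (FreeGroup.of i)).symm := rfl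
      rw [hinv, magnus_of, aff_symm_apply, aff_symm_apply]
      rw [rho_sub, rho_sub, rho_zero]
      abel
  | mul x y ihx ihy =>
      intro v
      have h1 : ∀ w, magnus K (x * y) w = magnus K x (magnus K y w) := by
        intro w; rw [map_mul]; rfl
      rw [h1, h1, ihy, ihx (rho K ((qk K) y) v + (magnus K) y 0), ihx ((magnus K) y 0),
        rho_add, rho_rho, map_mul, add_assoc]

lemma DD_one : DD K (1 : FreeGroup (Fin d)) = 0 := by
  have : magnus K 1 = 1 := map_one _
  simp [DD, this]

lemma DD_mul (g h : FreeGroup (Fin d)) :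
    DD K (g * h) = rho K (qk K g) (DD K h) + DD K g := by
  have h1 : magnus K (g * h) 0 = magnus K g (magnus K h 0) := by rw [map_mul]; rfl
  rw [DD, h1, magnus_apply]
  rfl

lemma qk_eq_one_iff (x : FreeGroup (Fin d)) : qk K x = 1 ↔ x ∈ K :=
  QuotientGroup.eq_one_iff x

lemma DD_inv (g : FreeGroup (Fin d)) :
    DD K g⁻¹ = - rho K ((qk K g))⁻¹ (DD K g) := by
  have h0 : DD K (g⁻¹ * g) = 0 := by rw [inv_mul_cancel, DD_one]
  rw [DD_mul] at h0
  have h2 : qk K g⁻¹ = (qk K g)⁻¹ := map_inv _ _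
  rw [h2] at h0
  have := congrArg (fun v => v - rho K ((qk K g))⁻¹ (DD K g)) h0
  simp at this
  linear_combination (norm := abel) this

lemma DD_mul_mem {x : FreeGroup (Fin d)} (hx : x ∈ K) (y : FreeGroup (Fin d)) :
    DD K (x * y) = DD K x + DD K y := by
  rw [DD_mul, (qk_eq_one_iff K x).2 hx, rho_one, add_comm]

lemma DD_inv_mem {x : FreeGroup (Fin d)} (hx : x ∈ K) :
    DD K x⁻¹ = - DD K x := by
  rw [DD_inv, (qk_eq_one_iff K x).2 hx]
  simp

lemma DD_conj {z : FreeGroup (Fin d)} (hz : z ∈ K) (w : FreeGroup (Fin d)) :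
    DD K (w * z * w⁻¹) = rho K (qk K w) (DD K z) := by
  rw [DD_mul, DD_mul, DD_inv]
  have h1 : qk K (w * z) = qk K w := by rw [map_mul, (qk_eq_one_iff K z).2 hz, mul_one]
  rw [h1, rho_neg, rho_rho, mul_inv_cancel, rho_one]
  abel

/-- The subgroup of elements of `K` with vanishing Fox derivative. -/
noncomputable def SS : Subgroup (FreeGroup (Fin d)) where
  carrier := {z | z ∈ K ∧ DD K z = 0}
  one_mem' := ⟨K.one_mem, DD_one K⟩
  mul_mem' := by
    rintro a b ⟨ha, hda⟩ ⟨hb, hdb⟩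
    exact ⟨K.mul_mem ha hb, by rw [DD_mul_mem K ha, hda, hdb, add_zero]⟩
  inv_mem' := by
    rintro a ⟨ha, hda⟩
    exact ⟨K.inv_mem ha, by rw [DD_inv_mem K ha, hda, neg_zero]⟩

lemma DD_eq_zero_of_mem_commutator {z : FreeGroup (Fin d)}
    (hz : z ∈ (⁅K, K⁆ : Subgroup (FreeGroup (Fin d)))) : z ∈ K ∧ DD K z = 0 := by
  have hle : (⁅K, K⁆ : Subgroup (FreeGroup (Fin d))) ≤ SS K := by
    rw [commutator_le]
    intro a ha b hb
    constructor
    · exact K.mul_mem (K.mul_mem (K.mul_mem ha hb) (K.inv_mem ha)) (K.inv_mem hb)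
    · rw [commutatorElement_def, DD_mul_mem K (K.mul_mem (K.mul_mem ha hb) (K.inv_mem ha)),
        DD_mul_mem K (K.mul_mem ha hb), DD_mul_mem K ha, DD_inv_mem K ha, DD_inv_mem K hb]
      abel
  exact hle hz

lemma DD_of (i : Fin d) : DD K (FreeGroup.of i) = sing K (1, i) := by
  rw [DD, magnus_of, aff_apply, rho_zero, zero_add]

/-- coset representative -/
noncomputable def wrep (c : FreeGroup (Fin d) ⧸ K) : FreeGroup (Fin d) := Quotient.out c

lemma qk_out (c : FreeGroup (Fin d) ⧸ K) : qk K (wrep K c) = c := QuotientGroup.out_eq' c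

open Classical in
/-- delta function on the quotient group -/
noncomputable def delta (c : FreeGroup (Fin d) ⧸ K) : (FreeGroup (Fin d) ⧸ K) → ℚ :=
  fun x => if x = c then 1 else 0

/-- translation on functions on the quotient -/
def tau (γ : FreeGroup (Fin d) ⧸ K) (u : (FreeGroup (Fin d) ⧸ K) → ℚ) :
    (FreeGroup (Fin d) ⧸ K) → ℚ := fun x => u (x * γ)

lemma tau_delta (γ c : FreeGroup (Fin d) ⧸ K) : tau K γ (delta K c) = delta K (c * γ⁻¹) := by
  funext x
  show (if x * γ = c then (1:ℚ) else 0) = if x = c * γ⁻¹ then 1 else 0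
  by_cases h : x = c * γ⁻¹
  · rw [if_pos ((eq_mul_inv_iff_mul_eq).1 h), if_pos h]
  · rw [if_neg (fun hh => h ((eq_mul_inv_iff_mul_eq).2 hh)), if_neg h]

@[simp] lemma tau_add (γ : FreeGroup (Fin d) ⧸ K) (u v : (FreeGroup (Fin d) ⧸ K) → ℚ) :
    tau K γ (u + v) = tau K γ u + tau K γ v := rfl

@[simp] lemma tau_neg (γ : FreeGroup (Fin d) ⧸ K) (u : (FreeGroup (Fin d) ⧸ K) → ℚ) :
    tau K γ (-u) = -(tau K γ u) := rfl

@[simp] lemma tau_sub (γ : FreeGroup (Fin d) ⧸ K) (u v : (FreeGroup (Fin d) ⧸ K) → ℚ) :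
    tau K γ (u - v) = tau K γ u - tau K γ v := rfl

/-- The boundary map (cycle detecting map). -/
noncomputable def alphaL : VV d K →ₗ[ℚ] ((FreeGroup (Fin d) ⧸ K) → ℚ) where
  toFun f := fun x => ∑ i : Fin d, (f (qk K (FreeGroup.of i) * x, i) - f (x, i))
  map_add' f g := by
    funext x
    show ∑ i : Fin d, ((f + g) (qk K (FreeGroup.of i) * x, i) - (f + g) (x, i))
        = (∑ i : Fin d, (f (qk K (FreeGroup.of i) * x, i) - f (x, i)))
          + ∑ i : Fin d, (g (qk K (FreeGroup.of i) * x, i) - g (x, i))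
    rw [← Finset.sum_add_distrib]
    exact Finset.sum_congr rfl fun i _ => by simp only [Pi.add_apply]; ring
  map_smul' a f := by
    funext x
    show ∑ i : Fin d, ((a • f) (qk K (FreeGroup.of i) * x, i) - (a • f) (x, i))
        = a • ∑ i : Fin d, (f (qk K (FreeGroup.of i) * x, i) - f (x, i))
    rw [Finset.smul_sum]
    exact Finset.sum_congr rfl fun i _ => by simp only [Pi.smul_apply]; rw [smul_sub]

lemma alpha_rho (γ : FreeGroup (Fin d) ⧸ K) (f : VV d K) :
    alphaL K (rho K γ f) = tau K γ (alphaL K f) := by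
  funext x
  show ∑ i : Fin d, _ = ∑ i : Fin d, _
  exact Finset.sum_congr rfl fun i _ => by
    show f (qk K (FreeGroup.of i) * x * γ, i) - f (x * γ, i)
        = f (qk K (FreeGroup.of i) * (x * γ), i) - f (x * γ, i)
    rw [mul_assoc]

lemma alpha_DD (g : FreeGroup (Fin d)) :
    alphaL K (DD K g) = delta K ((qk K g)⁻¹) - delta K 1 := by
  induction g with
  | C1 =>
      rw [DD_one, map_zero, map_one]
      simp
  | of i =>
      have hp : (pure i : FreeGroup (Fin d)) = FreeGroup.of i := rfl
      rw [DD_of]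
      funext x
      show ∑ j : Fin d, (sing K (1, i) (qk K (FreeGroup.of j) * x, j) - sing K (1, i) (x, j)) = _
      rw [Finset.sum_eq_single i]
      · have e1 : (sing K (1, i) (qk K (FreeGroup.of i) * x, i) : ℚ)
            = delta K ((qk K (FreeGroup.of i))⁻¹) x := by
          show (if ((qk K (FreeGroup.of i) * x, i) : (FreeGroup (Fin d) ⧸ K) × Fin d) = (1, i)
              then (1:ℚ) else 0) = if x = (qk K (FreeGroup.of i))⁻¹ then 1 else 0
          by_cases h : x = (qk K (FreeGroup.of i))⁻¹
          · rw [if_pos (by rw [h, mul_inv_cancel]), if_pos h]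
          · rw [if_neg (fun hh => h (by
              have h1 : qk K (FreeGroup.of i) * x = 1 := (Prod.mk.injEq _ _ _ _ ▸ hh).1
              exact ((mul_eq_one_iff_inv_eq).1 h1).symm)), if_neg h]
        have e2 : (sing K (1, i) (x, i) : ℚ) = delta K 1 x := by
          show (if ((x, i) : (FreeGroup (Fin d) ⧸ K) × Fin d) = (1, i) then (1:ℚ) else 0)
              = if x = 1 then 1 else 0
          simp [Prod.ext_iff]
        rw [e1, e2]
        rfl
      · intro j _ hji
        simp [sing, Prod.ext_iff, hji]
      · intro h
        exact absurd (Finset.mem_univ i) h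
  | inv_of i ih =>
      have hp : (pure i : FreeGroup (Fin d)) = FreeGroup.of i := rfl
      rw [DD_inv, map_neg, alpha_rho, ih, tau_sub, tau_delta, tau_delta, map_inv]
      simp only [inv_inv, inv_mul_cancel, one_mul]
      abel
  | mul g h ihg ihh =>
      rw [DD_mul, map_add, alpha_rho, ihg, ihh, tau_sub, tau_delta, tau_delta, map_mul,
        mul_inv_rev, one_mul]
      abel

lemma alpha_DD_mem {x : FreeGroup (Fin d)} (hx : x ∈ K) : alphaL K (DD K x) = 0 := by
  rw [alpha_DD, (qk_eq_one_iff K x).2 hx, inv_one, sub_self]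

lemma alpha_sing (c : FreeGroup (Fin d) ⧸ K) (j : Fin d) :
    alphaL K (sing K (c, j)) = delta K ((qk K (FreeGroup.of j))⁻¹ * c) - delta K c := by
  funext x
  show ∑ i : Fin d, (sing K (c, j) (qk K (FreeGroup.of i) * x, i) - sing K (c, j) (x, i)) = _
  rw [Finset.sum_eq_single j]
  · have e1 : (sing K (c, j) (qk K (FreeGroup.of j) * x, j) : ℚ)
        = delta K ((qk K (FreeGroup.of j))⁻¹ * c) x := by
      show (if ((qk K (FreeGroup.of j) * x, j) : (FreeGroup (Fin d) ⧸ K) × Fin d) = (c, j)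
          then (1:ℚ) else 0) = if x = (qk K (FreeGroup.of j))⁻¹ * c then 1 else 0
      by_cases h : x = (qk K (FreeGroup.of j))⁻¹ * c
      · rw [if_pos (by rw [h, mul_inv_cancel_left]), if_pos h]
      · rw [if_neg (fun hh => h (by
          have h1 : qk K (FreeGroup.of j) * x = c := (Prod.mk.injEq _ _ _ _ ▸ hh).1
          rw [← h1, inv_mul_cancel_left])), if_neg h]
    have e2 : (sing K (c, j) (x, j) : ℚ) = delta K c x := by
      show (if ((x, j) : (FreeGroup (Fin d) ⧸ K) × Fin d) = (c, j) then (1:ℚ) else 0)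
          = if x = c then 1 else 0
      simp [Prod.ext_iff]
    rw [e1, e2]
    rfl
  · intro i _ hij
    simp [sing, Prod.ext_iff, hij]
  · intro h
    exact absurd (Finset.mem_univ j) h

section FintypeQuot

variable [Fintype (FreeGroup (Fin d) ⧸ K)]

/-- `t` is the sum of its coordinates times basis vectors. -/
lemma sum_sing (t : VV d K) :
    ∑ p : (FreeGroup (Fin d) ⧸ K) × Fin d, t p • sing K p = t := by
  funext p'
  rw [Finset.sum_apply]
  have : ∀ p : (FreeGroup (Fin d) ⧸ K) × Fin d,
      (t p • sing K p) p' = if p' = p then t p else 0 := by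
    intro p
    show t p • (if p' = p then (1:ℚ) else 0) = _
    by_cases h : p' = p <;> simp [h]
  rw [Finset.sum_congr rfl fun p _ => this p, Finset.sum_ite_eq]
  simp

/-- The retraction `ℚ[Γ] → V` given by Fox derivatives of coset representatives. -/
noncomputable def rbarL : ((FreeGroup (Fin d) ⧸ K) → ℚ) →ₗ[ℚ] VV d K :=
  ∑ x : FreeGroup (Fin d) ⧸ K,
    (LinearMap.proj (R := ℚ) (φ := fun _ => ℚ) x).smulRight (DD K (wrep K (x⁻¹)))

lemma rbar_delta (c : FreeGroup (Fin d) ⧸ K) :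
    rbarL K (delta K c) = DD K (wrep K (c⁻¹)) := by
  rw [rbarL]
  rw [LinearMap.sum_apply]
  have : ∀ x : FreeGroup (Fin d) ⧸ K,
      ((LinearMap.proj (R := ℚ) (φ := fun _ => ℚ) x).smulRight (DD K (wrep K (x⁻¹)))) (delta K c)
      = if x = c then DD K (wrep K (x⁻¹)) else 0 := by
    intro x
    show (delta K c x) • DD K (wrep K (x⁻¹)) = _
    by_cases h : x = c <;> simp [delta, h]
  rw [Finset.sum_congr rfl fun x _ => this x, Finset.sum_ite_eq']
  simp

/-- Schreier generator elements of `K`. -/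
noncomputable def kelem (p : (FreeGroup (Fin d) ⧸ K) × Fin d) : FreeGroup (Fin d) :=
  wrep K (p.1⁻¹) * FreeGroup.of p.2 *
    (wrep K (p.1⁻¹ * qk K (FreeGroup.of p.2)))⁻¹

lemma kelem_mem (p : (FreeGroup (Fin d) ⧸ K) × Fin d) : kelem K p ∈ K := by
  rw [← qk_eq_one_iff K, kelem, map_mul, map_mul, map_inv, qk_out, qk_out, mul_inv_rev,
    ← mul_assoc]
  simp [mul_assoc]

lemma DD_kelem (p : (FreeGroup (Fin d) ⧸ K) × Fin d) :
    DD K (kelem K p) = sing K p - (rbarL K (alphaL K (sing K p))) := by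
  obtain ⟨c, i⟩ := p
  rw [alpha_sing, map_sub, rbar_delta, rbar_delta, mul_inv_rev, inv_inv, kelem]
  rw [DD_mul, DD_mul, DD_inv, DD_of, qk_out, map_mul, qk_out]
  rw [rho_neg, rho_rho, mul_inv_cancel, rho_one]
  have hs : rho K (c⁻¹) (sing K (1, i)) = sing K (c, i) := by
    funext p'
    show (if ((p'.1 * c⁻¹, p'.2) : (FreeGroup (Fin d) ⧸ K) × Fin d) = (1, i) then (1:ℚ) else 0)
        = if p' = (c, i) then 1 else 0
    by_cases h : p' = (c, i)
    · rw [if_pos (by rw [h]; simp), if_pos h]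
    · rw [if_neg, if_neg h]
      intro hh
      apply h
      have h1 := (Prod.mk.injEq _ _ _ _ ▸ hh).1
      have h2 := (Prod.mk.injEq _ _ _ _ ▸ hh).2
      have : p'.1 = c := by
        have := congrArg (fun z => z * c) h1
        simpa [mul_assoc] using this
      exact Prod.ext this h2
  rw [hs]
  abel

/-- Anything in the kernel of the boundary map lies in the span of `DD '' K`. -/
lemma ker_alpha_le_span (t : VV d K) (ht : alphaL K t = 0) :
    t ∈ Submodule.span ℚ (DD K '' (K : Set (FreeGroup (Fin d)))) := by
  have h1 : rbarL K (alphaL K t) = 0 := by rw [ht, map_zero]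
  have key : ∑ p : (FreeGroup (Fin d) ⧸ K) × Fin d, t p • DD K (kelem K p) = t := by
    have e1 : ∀ p : (FreeGroup (Fin d) ⧸ K) × Fin d,
        t p • DD K (kelem K p) = t p • sing K p - t p • rbarL K (alphaL K (sing K p)) := by
      intro p; rw [DD_kelem, smul_sub]
    rw [Finset.sum_congr rfl fun p _ => e1 p, Finset.sum_sub_distrib, sum_sing]
    have e2 : ∑ p : (FreeGroup (Fin d) ⧸ K) × Fin d, t p • rbarL K (alphaL K (sing K p))
        = rbarL K (alphaL K t) := by
      conv_rhs => rw [← sum_sing K t]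
      rw [map_sum, map_sum]
      exact (Finset.sum_congr rfl fun p _ => by rw [map_smul, map_smul]).symm
    rw [e2, h1, sub_zero]
  rw [← key]
  exact Submodule.sum_mem _ fun p _ =>
    Submodule.smul_mem _ _ (Submodule.subset_span ⟨kelem K p, kelem_mem K p, rfl⟩)

/-- Fixed subspace of the translation by `γ`. -/
noncomputable def FixSub (γ : FreeGroup (Fin d) ⧸ K) : Submodule ℚ (VV d K) where
  carrier := {f | rho K γ f = f}
  add_mem' := by
    intro a b ha hb
    show rho K γ (a + b) = a + b
    rw [rho_add, ha, hb]
  zero_mem' := rho_zero K γ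
  smul_mem' := by
    intro a f hf
    show rho K γ (a • f) = a • f
    rw [rho_smul, hf]

lemma fix_pow {γ : FreeGroup (Fin d) ⧸ K} {f : VV d K} (hf : f ∈ FixSub K γ)
    (c : FreeGroup (Fin d) ⧸ K) (i : Fin d) : ∀ n : ℤ, f (c * γ ^ n, i) = f (c, i) := by
  have hfix : ∀ p : (FreeGroup (Fin d) ⧸ K) × Fin d, f (p.1 * γ, p.2) = f p := by
    intro p
    exact congrFun (hf : rho K γ f = f) p
  intro n
  induction n using Int.induction_on with
  | zero => simp
  | succ n ih =>
      have : c * γ ^ ((n : ℤ) + 1) = (c * γ ^ (n : ℤ)) * γ := by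
        rw [zpow_add_one, mul_assoc]
      rw [this, hfix (c * γ ^ (n : ℤ), i), ih]
  | pred n ih =>
      have h1 := hfix (c * γ ^ (-(n : ℤ) - 1), i)
      have h2 : c * γ ^ (-(n : ℤ) - 1) * γ = c * γ ^ (-(n : ℤ)) := by
        rw [mul_assoc, ← zpow_add_one, sub_add_cancel]
      rw [h2] at h1
      rw [h1] at ih
      exact ih

lemma finrank_fix_le (γ : FreeGroup (Fin d) ⧸ K) :
    Module.finrank ℚ ↥(FixSub K γ)
      ≤ Nat.card ((FreeGroup (Fin d) ⧸ K) ⧸ Subgroup.zpowers γ) * d := by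
  haveI : Fintype ((FreeGroup (Fin d) ⧸ K) ⧸ Subgroup.zpowers γ) := Fintype.ofFinite _
  set Q := (FreeGroup (Fin d) ⧸ K) ⧸ Subgroup.zpowers γ
  let r : ↥(FixSub K γ) →ₗ[ℚ] (Q × Fin d → ℚ) :=
    { toFun := fun f => fun p => (f : VV d K) (Quotient.out p.1, p.2)
      map_add' := fun f g => rfl
      map_smul' := fun a f => rfl }
  have hinj : Function.Injective r := by
    intro f g hfg
    apply Subtype.ext
    funext p
    obtain ⟨c, i⟩ := p
    have hout : (QuotientGroup.mk c : Q) = QuotientGroup.mk (Quotient.out (QuotientGroup.mk c : Q)) := by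
      rw [QuotientGroup.out_eq']
    have hmem : c⁻¹ * Quotient.out (QuotientGroup.mk c : Q) ∈ Subgroup.zpowers γ :=
      QuotientGroup.eq.1 hout
    obtain ⟨n, hn⟩ := Subgroup.mem_zpowers_iff.1 hmem
    have hc : Quotient.out (QuotientGroup.mk c : Q) = c * γ ^ n := by
      rw [hn, mul_inv_cancel_left]
    have e1 : (f : VV d K) (c, i) = (f : VV d K) (Quotient.out (QuotientGroup.mk c : Q), i) := by
      rw [hc, fix_pow K f.2 c i n]
    have e2 : (g : VV d K) (c, i) = (g : VV d K) (Quotient.out (QuotientGroup.mk c : Q), i) := by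
      rw [hc, fix_pow K g.2 c i n]
    rw [e1, e2]
    exact congrFun hfg (QuotientGroup.mk c, i)
  calc Module.finrank ℚ ↥(FixSub K γ) ≤ Module.finrank ℚ (Q × Fin d → ℚ) :=
        LinearMap.finrank_le_finrank_of_injective hinj
    _ = Fintype.card (Q × Fin d) := Module.finrank_fintype_fun_eq_card ℚ
    _ = Fintype.card Q * d := by rw [Fintype.card_prod, Fintype.card_fin]
    _ = Nat.card Q * d := by rw [Nat.card_eq_fintype_card]

/-- augmentation -/
noncomputable def epsL : ((FreeGroup (Fin d) ⧸ K) → ℚ) →ₗ[ℚ] ℚ :=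
  ∑ x : FreeGroup (Fin d) ⧸ K, LinearMap.proj (R := ℚ) (φ := fun _ => ℚ) x

lemma eps_apply (u : (FreeGroup (Fin d) ⧸ K) → ℚ) :
    epsL K u = ∑ x : FreeGroup (Fin d) ⧸ K, u x := by
  rw [epsL, LinearMap.sum_apply]
  rfl

lemma range_alpha_le_ker_eps : LinearMap.range (alphaL K) ≤ LinearMap.ker (epsL K) := by
  rintro u ⟨f, rfl⟩
  rw [LinearMap.mem_ker, eps_apply]
  have : ∀ x : FreeGroup (Fin d) ⧸ K, alphaL K f x
      = ∑ i : Fin d, (f (qk K (FreeGroup.of i) * x, i) - f (x, i)) := fun _ => rfl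
  rw [Finset.sum_congr rfl fun x _ => this x, Finset.sum_comm]
  apply Finset.sum_eq_zero
  intro i _
  rw [Finset.sum_sub_distrib]
  have : ∑ x : FreeGroup (Fin d) ⧸ K, f (qk K (FreeGroup.of i) * x, i)
      = ∑ x : FreeGroup (Fin d) ⧸ K, f (x, i) :=
    Fintype.sum_equiv (Equiv.mulLeft (qk K (FreeGroup.of i))) _ _ (fun x => rfl)
  rw [this, sub_self]

lemma finrank_ker_eps :
    Module.finrank ℚ ↥(LinearMap.ker (epsL K)) + 1 = Fintype.card (FreeGroup (Fin d) ⧸ K) := by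
  have hsurj : LinearMap.range (epsL K) = ⊤ := by
    rw [LinearMap.range_eq_top]
    intro a
    refine ⟨a • delta K 1, ?_⟩
    rw [map_smul, eps_apply]
    have : ∀ x : FreeGroup (Fin d) ⧸ K, delta K 1 x = if x = 1 then (1:ℚ) else 0 := fun _ => rfl
    rw [Finset.sum_congr rfl fun x _ => this x, Finset.sum_ite_eq']
    simp
  have h1 := LinearMap.finrank_range_add_finrank_ker (epsL K)
  rw [hsurj] at h1
  rw [finrank_top, Module.finrank_self] at h1
  rw [Module.finrank_fintype_fun_eq_card] at h1
  omega

/-- The key faithfulness contradiction. -/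
lemma faithful_contradiction (hd : 2 ≤ d) {γ : FreeGroup (Fin d) ⧸ K} (hγ : γ ≠ 1)
    (hfix : ∀ x ∈ K, rho K γ (DD K x) = DD K x) : False := by
  set m := Fintype.card (FreeGroup (Fin d) ⧸ K) with hm
  -- the span of DD '' K is inside the fixed space
  have hWfix : Submodule.span ℚ (DD K '' (K : Set (FreeGroup (Fin d)))) ≤ FixSub K γ := by
    rw [Submodule.span_le]
    rintro v ⟨x, hx, rfl⟩
    exact hfix x hx
  have hker : LinearMap.ker (alphaL K) ≤ FixSub K γ := by
    intro t ht
    exact hWfix (ker_alpha_le_span K t (LinearMap.mem_ker.1 ht))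
  -- rank computations
  have hrank := LinearMap.finrank_range_add_finrank_ker (alphaL K)
  rw [Module.finrank_fintype_fun_eq_card, Fintype.card_prod, Fintype.card_fin, ← hm] at hrank
  have hs : Module.finrank ℚ ↥(LinearMap.range (alphaL K)) + 1 ≤ m := by
    have := Submodule.finrank_mono (range_alpha_le_ker_eps K)
    have h2 := finrank_ker_eps K
    omega
  have hrk : Module.finrank ℚ ↥(LinearMap.ker (alphaL K))
      ≤ Module.finrank ℚ ↥(FixSub K γ) := Submodule.finrank_mono hker
  set o := orderOf γ with ho
  have ho2 : 2 ≤ o := by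
    have h1 : o ≠ 1 := fun h => hγ (orderOf_eq_one_iff.1 h)
    have h0 : 0 < o := orderOf_pos γ
    omega
  set kk := Nat.card ((FreeGroup (Fin d) ⧸ K) ⧸ Subgroup.zpowers γ) with hkk
  have hlag : m = kk * o := by
    have := Subgroup.card_eq_card_quotient_mul_card_subgroup (Subgroup.zpowers γ)
    rw [Nat.card_zpowers] at this
    rw [hm, ← Nat.card_eq_fintype_card]
    exact this
  have hfixle := finrank_fix_le K γ
  rw [← hkk] at hfixle
  -- arithmetic contradiction
  have hdo : d + o ≤ d * o := add_le_mul hd ho2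
  have h5 : kk * d + m ≤ m * d := by
    calc kk * d + m = kk * d + kk * o := by rw [hlag]
      _ = kk * (d + o) := by ring
      _ ≤ kk * (d * o) := Nat.mul_le_mul_left kk hdo
      _ = m * d := by rw [hlag]; ring
  have hr2 : Module.finrank ℚ ↥(LinearMap.ker (alphaL K)) ≤ kk * d := le_trans hrk hfixle
  omega

end FintypeQuot

end Magnus


/-- Let `K` be a characteristic finite-index subgroup of a free group `F`
of rank `d ≥ 2` and `ψ` an automorphism of `F`.  If the automorphism induced by `ψ` on
`Γ = F/K` is nontrivial (some `g` has `ψ(g)·g⁻¹ ∉ K`), then the automorphism induced by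
`ψ` on the abelianization `K/[K,K]` is nontrivial (some `x ∈ K` has `ψ(x)·x⁻¹ ∉ [K,K]`). -/
theorem nontrivial_on_quotient_implies_nontrivial_on_homology (d : ℕ) (hd : 2 ≤ d)
    (K : Subgroup (FreeGroup (Fin d))) (hchar : K.Characteristic) (hFI : K.FiniteIndex)
    (ψ : FreeGroup (Fin d) ≃* FreeGroup (Fin d))
    (hψ : ∃ g : FreeGroup (Fin d), ψ g * g⁻¹ ∉ K) :
    ∃ x ∈ K, ψ x * x⁻¹ ∉ (⁅K, K⁆ : Subgroup (FreeGroup (Fin d))) := by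
  haveI := hchar
  haveI := hFI
  haveI : K.Normal := inferInstance
  haveI : Finite (FreeGroup (Fin d) ⧸ K) := Subgroup.finite_quotient_of_finiteIndex
  haveI : Fintype (FreeGroup (Fin d) ⧸ K) := Fintype.ofFinite _
  by_contra hcon
  push_neg at hcon
  obtain ⟨g, hg⟩ := hψ
  have hψK : ∀ x, x ∈ K → (ψ x) ∈ K := by
    intro x hx
    have hfixed := hchar.fixed ψ
    rw [← hfixed] at hx
    exact hx
  have hDD : ∀ x ∈ K, DD K (ψ x) = DD K x := by
    intro x hx
    obtain ⟨hcK, hc0⟩ := DD_eq_zero_of_mem_commutator K (hcon x hx)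
    have hsplit : ψ x = (ψ x * x⁻¹) * x := by group
    rw [hsplit, DD_mul_mem K hcK, hc0, zero_add]
  set γ := (qk K (ψ g))⁻¹ * qk K g with hγdef
  have hγ : γ ≠ 1 := by
    intro h1
    apply hg
    rw [← qk_eq_one_iff K, map_mul, map_inv]
    have h2 : qk K (ψ g) = qk K g := inv_mul_eq_one.1 h1
    rw [h2, mul_inv_cancel]
  have hfix : ∀ x ∈ K, rho K γ (DD K x) = DD K x := by
    intro x hx
    have hx' : g * x * g⁻¹ ∈ K := Subgroup.Normal.conj_mem ‹K.Normal› x hx g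
    have e1 : DD K (g * x * g⁻¹) = rho K (qk K g) (DD K x) := DD_conj K hx g
    have e2 : DD K (ψ (g * x * g⁻¹)) = DD K (g * x * g⁻¹) := hDD _ hx'
    have e3 : ψ (g * x * g⁻¹) = ψ g * ψ x * (ψ g)⁻¹ := by rw [map_mul, map_mul, map_inv]
    have e4 : DD K (ψ g * ψ x * (ψ g)⁻¹) = rho K (qk K (ψ g)) (DD K (ψ x)) :=
      DD_conj K (hψK x hx) (ψ g)
    have e : rho K (qk K (ψ g)) (DD K x) = rho K (qk K g) (DD K x) := by
      calc rho K (qk K (ψ g)) (DD K x) = rho K (qk K (ψ g)) (DD K (ψ x)) := by rw [hDD x hx]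
        _ = DD K (ψ g * ψ x * (ψ g)⁻¹) := e4.symm
        _ = DD K (ψ (g * x * g⁻¹)) := by rw [e3]
        _ = DD K (g * x * g⁻¹) := e2
        _ = rho K (qk K g) (DD K x) := e1
    rw [hγdef, ← rho_rho, ← e, rho_rho, inv_mul_cancel, rho_one]
  exact faithful_contradiction K hd hγ hfix
end

section
/- Let F be a free group of finite rank d ≥ 2 and let (K_i)_{i ∈ ℕ} be a sequence of characteristic finite-index subgroups of F whose intersection is trivial. Then for every nontrivial automorphism ψ of F there exists an index i such that the automorphism induced by ψ on the abelianization K_i/[K_i,K_i] is nontrivial. -/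
open Subgroup
open scoped commutatorElement

section helpers
open Equiv

/-- shear permutation (x,y) ↦ (x+y, y) -/
def shA : Equiv.Perm (ℤ × ℤ) where
  toFun p := (p.1 + p.2, p.2)
  invFun p := (p.1 - p.2, p.2)
  left_inv p := by simp
  right_inv p := by simp

def shB : Equiv.Perm (ℤ × ℤ) where
  toFun p := (p.1, p.2 + p.1)
  invFun p := (p.1, p.2 - p.1)
  left_inv p := by simp
  right_inv p := by simp

lemma shA_pow (n : ℕ) (p : ℤ × ℤ) : (shA ^ n) p = (p.1 + n * p.2, p.2) := by
  induction n with
  | zero => simp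
  | succ n ih =>
    rw [pow_succ', Equiv.Perm.mul_apply, ih]
    show (_ + _, _) = _
    push_cast
    rw [Prod.ext_iff]
    constructor
    · dsimp; ring
    · rfl

lemma shB_pow (n : ℕ) (p : ℤ × ℤ) : (shB ^ n) p = (p.1, p.2 + n * p.1) := by
  induction n with
  | zero => simp
  | succ n ih =>
    rw [pow_succ', Equiv.Perm.mul_apply, ih]
    show (_, _ + _) = _
    push_cast
    rw [Prod.ext_iff]
    constructor
    · rfl
    · dsimp; ring

lemma freeGroup_pow_noncomm {d : ℕ} (i0 i1 : Fin d) (hne : i0 ≠ i1) (n : ℕ) (hn : n ≠ 0) :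
    FreeGroup.of i0 ^ n * FreeGroup.of i1 ^ n ≠ FreeGroup.of i1 ^ n * FreeGroup.of i0 ^ n := by
  intro hcomm
  classical
  let f : FreeGroup (Fin d) →* Equiv.Perm (ℤ × ℤ) :=
    FreeGroup.lift (fun i => if i = i0 then shA else if i = i1 then shB else 1)
  have hfa : f (FreeGroup.of i0) = shA := by simp [f]
  have hfb : f (FreeGroup.of i1) = shB := by simp [f, hne.symm]
  have := congrArg f hcomm
  rw [map_mul, map_mul, map_pow, map_pow, hfa, hfb] at this
  have h2 : (shA ^ n * shB ^ n) ((1:ℤ), (0:ℤ)) = (shB ^ n * shA ^ n) ((1:ℤ), (0:ℤ)) := by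
    rw [this]
  rw [Equiv.Perm.mul_apply, Equiv.Perm.mul_apply, shB_pow, shA_pow, shA_pow, shB_pow] at h2
  simp only [Prod.ext_iff] at h2
  obtain ⟨h2, -⟩ := h2
  simp at h2
  exact hn h2

/-- Right-translation automorphism of `Multiplicative (Q → ℤ)`. -/
def shiftAut {Q : Type*} [Group Q] (q : Q) : MulAut (Multiplicative (Q → ℤ)) where
  toFun f := Multiplicative.ofAdd fun k => f.toAdd (k * q)
  invFun f := Multiplicative.ofAdd fun k => f.toAdd (k * q⁻¹)
  left_inv f := by
    apply Multiplicative.toAdd.injective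
    funext k
    simp [mul_assoc]
  right_inv f := by
    apply Multiplicative.toAdd.injective
    funext k
    simp [mul_assoc]
  map_mul' f g := rfl

def shiftHom (Q : Type*) [Group Q] : Q →* MulAut (Multiplicative (Q → ℤ)) where
  toFun := shiftAut
  map_one' := by
    ext f : 1
    apply Multiplicative.toAdd.injective
    funext k
    simp [shiftAut]
  map_mul' q r := by
    ext f : 1
    apply Multiplicative.toAdd.injective
    funext k
    simp [shiftAut, mul_assoc]

open Classical in
noncomputable def ind1 (Q : Type*) [Group Q] : Multiplicative (Q → ℤ) :=
  Multiplicative.ofAdd fun k => if k = 1 then (1 : ℤ) else 0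

lemma shiftHom_ind1 {Q : Type*} [Group Q] {q : Q} (h : shiftHom Q q (ind1 Q) = ind1 Q) :
    q = 1 := by
  classical
  have := congrFun (congrArg Multiplicative.toAdd h) 1
  simp only [shiftHom, shiftAut, ind1, MonoidHom.coe_mk, OneHom.coe_mk, MulEquiv.coe_mk,
    Equiv.coe_fn_mk, toAdd_ofAdd, one_mul] at this
  rw [if_pos trivial] at this
  by_contra hq
  rw [if_neg hq] at this
  norm_num at this

end helpers

/-- If `(K i)` is a sequence of characteristic finite-index subgroups of a
free group of rank `d ≥ 2` with trivial intersection, then every nontrivial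
automorphism `ψ` acts nontrivially on some abelianization `K i/[K i, K i]`. -/
theorem nontrivial_aut_acts_nontrivially_on_some_cover (d : ℕ) (hd : 2 ≤ d)
    (K : ℕ → Subgroup (FreeGroup (Fin d)))
    (hchar : ∀ i, (K i).Characteristic) (hFI : ∀ i, (K i).FiniteIndex)
    (hint : (⨅ i, K i) = ⊥)
    (ψ : FreeGroup (Fin d) ≃* FreeGroup (Fin d)) (hψ : ψ ≠ MulEquiv.refl _) :
    ∃ i, ∃ x ∈ K i, ψ x * x⁻¹ ∉ (⁅K i, K i⁆ : Subgroup (FreeGroup (Fin d))) := by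
  classical
  by_contra hcon
  push_neg at hcon
  apply hψ
  apply MulEquiv.ext
  intro g
  show ψ g = g
  by_contra hg
  set h : FreeGroup (Fin d) := ψ g * g⁻¹ with hhdef
  have hh1 : h ≠ 1 := by
    rw [hhdef, Ne, mul_inv_eq_one]
    exact hg
  obtain ⟨j, hhj⟩ : ∃ j, h ∉ K j := by
    by_contra hall
    push_neg at hall
    have : h ∈ ⨅ i, K i := Subgroup.mem_iInf.mpr hall
    rw [hint] at this
    exact hh1 this
  set N := K j with hNdef
  haveI hNc : N.Characteristic := hchar j
  haveI hNfi : N.FiniteIndex := hFI j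
  haveI hNn : N.Normal := inferInstance
  set N' : Subgroup (FreeGroup (Fin d)) := ⁅N, N⁆ with hN'def
  haveI hN'n : N'.Normal := Subgroup.commutator_normal N N
  set π : FreeGroup (Fin d) →* FreeGroup (Fin d) ⧸ N' := QuotientGroup.mk' N' with hπdef
  have hker : ∀ x : FreeGroup (Fin d), π x = 1 ↔ x ∈ N' := fun x => QuotientGroup.eq_one_iff x
  have πeq : ∀ a b : FreeGroup (Fin d), a * b⁻¹ ∈ N' → π a = π b := by
    intro a b hab
    have h1 : π (a * b⁻¹) = 1 := (hker _).mpr hab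
    rw [map_mul, map_inv, mul_inv_eq_one] at h1
    exact h1
  -- Step A : h commutes with N modulo N'
  have stepA : ∀ x ∈ N, Commute (π h) (π x) := by
    intro x hx
    have hx' : g⁻¹ * x * g ∈ N := by
      have := hNn.conj_mem x hx g⁻¹
      simpa using this
    have e1 : π (ψ (g⁻¹ * x * g)) = π (g⁻¹ * x * g) := πeq _ _ (hcon j _ hx')
    have e2 : π (ψ x) = π x := πeq _ _ (hcon j x hx)
    have e3 : ψ (g⁻¹ * x * g) = (ψ g)⁻¹ * ψ x * ψ g := by
      simp [map_mul]
    rw [e3] at e1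
    set u := π (ψ g)
    set v := π g
    set X := π x
    have k1 : u⁻¹ * X * u = v⁻¹ * X * v := by
      have l1 : π ((ψ g)⁻¹ * ψ x * ψ g) = u⁻¹ * X * u := by
        simp only [map_mul, map_inv, e2]
        rfl
      have l2 : π (g⁻¹ * x * g) = v⁻¹ * X * v := by
        simp only [map_mul, map_inv]
        rfl
      rw [l1, l2] at e1
      exact e1
    have hπh : π h = u * v⁻¹ := by rw [hhdef, map_mul, map_inv]
    rw [Commute, SemiconjBy, hπh]
    calc u * v⁻¹ * X = u * (v⁻¹ * X * v) * v⁻¹ := by group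
      _ = u * (u⁻¹ * X * u) * v⁻¹ := by rw [k1]
      _ = X * (u * v⁻¹) := by group
  -- the subgroup M = ⟨N, h⟩
  set M : Subgroup (FreeGroup (Fin d)) := N ⊔ Subgroup.closure {h} with hMdef
  have hNM : N ≤ M := le_sup_left
  have hhM : h ∈ M := by
    have h2 : Subgroup.closure {h} ≤ M := le_sup_right
    exact h2 (Subgroup.subset_closure rfl)
  have hMcl : M = Subgroup.closure ((N : Set (FreeGroup (Fin d))) ∪ {h}) := by
    rw [Subgroup.closure_union, Subgroup.closure_eq]
  -- M is commutative modulo N'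
  have stepComm : ∀ a ∈ M, ∀ b ∈ M, Commute (π a) (π b) := by
    have base : ∀ a ∈ (N : Set (FreeGroup (Fin d))) ∪ {h}, ∀ b ∈ (N : Set (FreeGroup (Fin d))) ∪ {h}, Commute (π a) (π b) := by
      rintro a (ha | ha) b (hb | hb)
      · have : ⁅a, b⁆ ∈ N' := Subgroup.commutator_mem_commutator ha hb
        exact commutatorElement_eq_one_iff_commute.mp
          (by rw [← map_commutatorElement]; exact (hker _).mpr this)
      · rw [Set.mem_singleton_iff] at hb; subst hb
        exact (stepA a ha).symm
      · rw [Set.mem_singleton_iff] at ha; subst ha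
        exact stepA b hb
      · rw [Set.mem_singleton_iff] at ha hb; subst ha; subst hb
        exact Commute.refl _
    intro a ha b hb
    rw [hMcl] at ha hb
    exact Subgroup.closure_induction₂
      (p := fun x y _ _ => Commute (π x) (π y))
      (fun x y hx hy => base x hx y hy)
      (fun x _ => by simp [Commute.one_left])
      (fun x _ => by simp [Commute.one_right])
      (fun x y z _ _ _ p1 p2 => by simpa [map_mul] using p1.mul_left p2)
      (fun y z x _ _ _ p1 p2 => by simpa [map_mul] using p1.mul_right p2)
      (fun x y _ _ p1 => by simpa [map_inv] using p1.inv_left)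
      (fun x y _ _ p1 => by simpa [map_inv] using p1.inv_right)
      ha hb
  -- M is a free group (Nielsen–Schreier)
  haveI : IsFreeGroup M := inferInstance
  set τ : M →* FreeGroup (Fin d) ⧸ N := (QuotientGroup.mk' N).comp M.subtype with hτdef
  have hτmem : ∀ z : M, τ z = 1 ↔ (z : FreeGroup (Fin d)) ∈ N := by
    intro z
    rw [hτdef]
    exact QuotientGroup.eq_one_iff _
  have hτh : τ ⟨h, hhM⟩ ≠ 1 := fun hc => hhj ((hτmem _).mp hc)
  obtain ⟨s₀, hs₀⟩ : ∃ s : IsFreeGroup.Generators M, τ (IsFreeGroup.of s) ≠ 1 := by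
    by_contra hall
    push_neg at hall
    have hτ1 : τ = 1 := IsFreeGroup.ext_hom fun s => by rw [hall s]; rfl
    rw [hτ1] at hτh
    exact hτh rfl
  by_cases hex : ∃ s : IsFreeGroup.Generators M, s ≠ s₀
  · -- main case : M has at least two generators
    obtain ⟨s₁, hs₁⟩ := hex
    set Q := FreeGroup (Fin d) ⧸ N with hQdef
    set ρ : M →* Multiplicative (Q → ℤ) ⋊[shiftHom Q] Q :=
      IsFreeGroup.lift (fun s => if s = s₁ then
        (⟨ind1 Q, τ (IsFreeGroup.of s)⟩ : Multiplicative (Q → ℤ) ⋊[shiftHom Q] Q)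
        else ⟨1, τ (IsFreeGroup.of s)⟩) with hρdef
    have hrightρ : SemidirectProduct.rightHom.comp ρ = τ := by
      apply IsFreeGroup.ext_hom
      intro s
      rw [MonoidHom.comp_apply, hρdef, IsFreeGroup.lift_of]
      split_ifs <;> rfl
    have hrightρ' : ∀ z : M, SemidirectProduct.rightHom (ρ z) = τ z := by
      intro z
      rw [← hrightρ]
      rfl
    have commρ : ∀ z w : M, (z : FreeGroup (Fin d)) ∈ N → (w : FreeGroup (Fin d)) ∈ N →
        Commute (ρ z) (ρ w) := by
      intro z w hz hw
      have hz1 : ρ z ∈ (SemidirectProduct.inl (φ := shiftHom Q)).range := by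
        rw [SemidirectProduct.range_inl_eq_ker_rightHom, MonoidHom.mem_ker, hrightρ']
        exact (hτmem z).mpr hz
      have hw1 : ρ w ∈ (SemidirectProduct.inl (φ := shiftHom Q)).range := by
        rw [SemidirectProduct.range_inl_eq_ker_rightHom, MonoidHom.mem_ker, hrightρ']
        exact (hτmem w).mpr hw
      obtain ⟨bz, hbz⟩ := hz1
      obtain ⟨bw, hbw⟩ := hw1
      rw [← hbz, ← hbw, Commute, SemiconjBy, ← map_mul, ← map_mul, mul_comm]
    have kill : ∀ z : M, (z : FreeGroup (Fin d)) ∈ N' → ρ z = 1 := by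
      have hle : N' ≤ Subgroup.map M.subtype ρ.ker := by
        rw [hN'def, Subgroup.commutator_le]
        intro x hx y hy
        refine ⟨⁅(⟨x, hNM hx⟩ : M), (⟨y, hNM hy⟩ : M)⁆, ?_, ?_⟩
        · have hk : ρ ⁅(⟨x, hNM hx⟩ : M), (⟨y, hNM hy⟩ : M)⁆ = 1 := by
            rw [map_commutatorElement]
            exact commutatorElement_eq_one_iff_commute.mpr (commρ _ _ hx hy)
          exact hk
        · simp [commutatorElement_def]
      intro z hz
      obtain ⟨w, hwk, hwz⟩ := hle hz
      have hwz' : w = z := Subtype.ext hwz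
      rw [← hwz']
      exact hwk
    set u : M := IsFreeGroup.of s₁ with hudef
    set v : M := IsFreeGroup.of s₀ with hvdef
    have hcomm_uv : Commute (ρ u) (ρ v) := by
      apply commutatorElement_eq_one_iff_commute.mp
      rw [← map_commutatorElement]
      apply kill
      have hc : Commute (π (u : FreeGroup (Fin d))) (π (v : FreeGroup (Fin d))) :=
        stepComm _ u.2 _ v.2
      have h1 : ⁅(u : FreeGroup (Fin d)), (v : FreeGroup (Fin d))⁆ ∈ N' := by
        rw [← hker, map_commutatorElement]
        exact commutatorElement_eq_one_iff_commute.mpr hc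
      simpa [commutatorElement_def] using h1
    have hρu : ρ u = ⟨ind1 Q, τ u⟩ := by
      rw [hρdef, hudef, IsFreeGroup.lift_of, if_pos rfl]
    have hρv : ρ v = ⟨1, τ v⟩ := by
      rw [hρdef, hvdef, IsFreeGroup.lift_of, if_neg (Ne.symm hs₁)]
    have hleft := congrArg SemidirectProduct.left hcomm_uv
    rw [hρu, hρv] at hleft
    simp only [SemidirectProduct.mul_left, map_one, mul_one, one_mul] at hleft
    exact hs₀ (shiftHom_ind1 hleft.symm)
  · -- degenerate case : M is cyclic, impossible since N is nonabelian
    push_neg at hex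
    have hn0 : N.index ≠ 0 := hNfi.index_ne_zero
    have hne : (⟨0, by omega⟩ : Fin d) ≠ ⟨1, by omega⟩ := by simp [Fin.ext_iff]
    have hxw : FreeGroup.of (⟨0, by omega⟩ : Fin d) ^ N.index ∈ N := N.pow_index_mem _
    have hyw : FreeGroup.of (⟨1, by omega⟩ : Fin d) ^ N.index ∈ N := N.pow_index_mem _
    have hxy₀ := freeGroup_pow_noncomm _ _ hne N.index hn0
    have htop : ∀ z : M, z ∈ Subgroup.closure
        (Set.range (IsFreeGroup.of : IsFreeGroup.Generators M → M)) := by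
      set C := Subgroup.closure (Set.range (IsFreeGroup.of : IsFreeGroup.Generators M → M))
        with hCdef
      intro z
      have hcomp : C.subtype.comp (IsFreeGroup.lift (fun s =>
          (⟨IsFreeGroup.of s, Subgroup.subset_closure (Set.mem_range_self s)⟩ : C)))
          = MonoidHom.id M := by
        apply IsFreeGroup.ext_hom
        intro s
        rw [MonoidHom.comp_apply, IsFreeGroup.lift_of]
        rfl
      have hz := DFunLike.congr_fun hcomp z
      rw [MonoidHom.comp_apply, MonoidHom.id_apply] at hz
      rw [← hz]
      exact Subtype.mem _
    have hMcomm : ∀ z w : M, Commute z w := by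
      intro z w
      refine Subgroup.closure_induction₂
        (p := fun x y _ _ => Commute x y)
        ?_
        (fun x _ => Commute.one_left x)
        (fun x _ => Commute.one_right x)
        (fun x y z _ _ _ p1 p2 => p1.mul_left p2)
        (fun y z x _ _ _ p1 p2 => p1.mul_right p2)
        (fun x y _ _ p1 => p1.inv_left)
        (fun x y _ _ p1 => p1.inv_right)
        (htop z) (htop w)
      rintro x y ⟨s, rfl⟩ ⟨t, rfl⟩
      rw [hex s, hex t]
      exact Commute.refl _
    have hcomm := hMcomm ⟨_, hNM hxw⟩ ⟨_, hNM hyw⟩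
    exact hxy₀ (by simpa using Subtype.ext_iff.mp hcomm)
end

section
/- Let G be a finitely generated residually finite group. Suppose that for every nontrivial g ∈ G there exists a finite-index characteristic subgroup K_g of G such that conjugation by g induces a nontrivial automorphism of the abelianization K_g/[K_g,K_g]. Then for every nontrivial automorphism ψ of G there exists a finite-index characteristic subgroup K of G such that ψ induces a nontrivial automorphism of K/[K,K]. -/
/-- Let `G` be a finitely generated residually finite group such that each
nontrivial `g ∈ G` acts nontrivially by conjugation on the abelianization of some
finite-index characteristic subgroup `K_g` (i.e. `g·x·g⁻¹·x⁻¹ ∉ [K_g,K_g]` for some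
`x ∈ K_g`).  Then every nontrivial automorphism `ψ` of `G` acts nontrivially on the
abelianization `K/[K,K]` of some finite-index characteristic subgroup `K`
(i.e. `ψ(x)·x⁻¹ ∉ [K,K]` for some `x ∈ K`). -/
theorem aut_acts_nontrivially_on_some_finiteIndex_abelianization (G : Type*) [Group G]
    (hfg : Group.FG G)
    (hrf : ∀ g : G, g ≠ 1 → ∃ N : Subgroup G, N.Normal ∧ N.FiniteIndex ∧ g ∉ N)
    (hconj : ∀ g : G, g ≠ 1 → ∃ K : Subgroup G, K.Characteristic ∧ K.FiniteIndex ∧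
      ∃ x ∈ K, g * x * g⁻¹ * x⁻¹ ∉ (⁅K, K⁆ : Subgroup G))
    (ψ : G ≃* G) (hψ : ψ ≠ MulEquiv.refl G) :
    ∃ K : Subgroup G, K.Characteristic ∧ K.FiniteIndex ∧
      ∃ x ∈ K, ψ x * x⁻¹ ∉ (⁅K, K⁆ : Subgroup G) := by
  obtain ⟨g, hg⟩ : ∃ g : G, ψ g ≠ g := by
    by_contra h
    push_neg at h
    exact hψ (by ext x; exact h x)
  have hc : ψ g * g⁻¹ ≠ 1 := fun h => hg (mul_inv_eq_one.mp h)
  obtain ⟨K, hKc, hKf, x, hxK, hx⟩ := hconj _ hc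
  refine ⟨K, hKc, hKf, ?_⟩
  by_contra h
  push_neg at h
  apply hx
  haveI : K.Characteristic := hKc
  haveI hKn : K.Normal := inferInstance
  haveI hDc : (⁅K, K⁆ : Subgroup G).Characteristic := inferInstance
  haveI hDn : (⁅K, K⁆ : Subgroup G).Normal := inferInstance
  set D : Subgroup G := ⁅K, K⁆ with hD
  have hy : g⁻¹ * x * g ∈ K := by
    have := hKn.conj_mem x hxK g⁻¹
    simpa using this
  have e1 : ψ x * x⁻¹ ∈ D := h x hxK
  have e2 : ψ (g⁻¹ * x * g) * (g⁻¹ * x * g)⁻¹ ∈ D := h _ hy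
  rw [← QuotientGroup.eq_one_iff (N := D) (ψ g * g⁻¹ * x * (ψ g * g⁻¹)⁻¹ * x⁻¹)]
  have p1 : ((ψ x : G) : G ⧸ D) = (x : G ⧸ D) := by
    rw [QuotientGroup.eq_iff_div_mem]
    simpa [div_eq_mul_inv] using e1
  have p2 : ((ψ (g⁻¹ * x * g) : G) : G ⧸ D) = ((g⁻¹ * x * g : G) : G ⧸ D) := by
    rw [QuotientGroup.eq_iff_div_mem]
    simpa [div_eq_mul_inv] using e2
  have p2' : ((ψ g : G) : G ⧸ D)⁻¹ * (x : G ⧸ D) * ((ψ g : G) : G ⧸ D)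
      = ((g : G) : G ⧸ D)⁻¹ * (x : G ⧸ D) * ((g : G) : G ⧸ D) := by
    have := p2
    simp only [map_mul, map_inv, QuotientGroup.mk_mul, QuotientGroup.mk_inv] at this
    rw [p1] at this
    simpa using this
  set A : G ⧸ D := ((ψ g : G) : G ⧸ D)
  set B : G ⧸ D := ((g : G) : G ⧸ D)
  set U : G ⧸ D := ((x : G) : G ⧸ D)
  show ((ψ g * g⁻¹ * x * (ψ g * g⁻¹)⁻¹ * x⁻¹ : G) : G ⧸ D) = 1
  have expand : ((ψ g * g⁻¹ * x * (ψ g * g⁻¹)⁻¹ * x⁻¹ : G) : G ⧸ D)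
      = A * B⁻¹ * U * (A * B⁻¹)⁻¹ * U⁻¹ := by
    simp [A, B, U, QuotientGroup.mk_mul, QuotientGroup.mk_inv]
  rw [expand]
  have key : A * B⁻¹ * U * (A * B⁻¹)⁻¹ = U := by
    have : U = A * (A⁻¹ * U * A) * A⁻¹ := by group
    calc A * B⁻¹ * U * (A * B⁻¹)⁻¹ = A * (B⁻¹ * U * B) * A⁻¹ := by group
    _ = A * (A⁻¹ * U * A) * A⁻¹ := by rw [← p2']
    _ = U := by group
  rw [key]
  group
end

section
/- Let F be a free group of finite rank d ≥ 2, let K be a characteristic finite-index subgroup of F with quotient Γ = F/K, let V = ℚ ⊗_ℤ K^{ab} with the conjugation action of Γ, and let ψ be an automorphism of F. If there is no ℚ-subspace of V other than 0 and V that is invariant both under the induced action of ψ and under the action of every element of Γ (i.e., the joint action of ψ and Γ on V is irreducible), then Γ is the trivial group. In fact, when Γ is nontrivial, the subspace V^Γ of Γ-fixed vectors is nonzero, proper, and invariant under the action induced by every automorphism of F. -/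
open scoped TensorProduct

/-- The conjugation action of `f : G` on the abelianization `K^{ab}` of a normal
subgroup `K ≤ G`. -/
noncomputable def conjAbHom {G : Type*} [Group G] (K : Subgroup G) [K.Normal] (f : G) :
    Abelianization K →* Abelianization K :=
  Abelianization.map ((MulAut.conjNormal (H := K) f).toMonoidHom)

/-- The `ℚ`-linear map on `V = ℚ ⊗_ℤ K^{ab}` induced by conjugation by `f : G`; this is
the action of the image of `f` in `Γ = G/K` on `V`. -/
noncomputable def conjLin {G : Type*} [Group G] (K : Subgroup G) [K.Normal] (f : G) :
    (ℚ ⊗[ℤ] Additive (Abelianization K)) →ₗ[ℚ] (ℚ ⊗[ℤ] Additive (Abelianization K)) :=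
  LinearMap.baseChange ℚ ((MonoidHom.toAdditive (conjAbHom K f)).toIntLinearMap)

/-- The restriction of an automorphism `ψ` of `G` to a characteristic subgroup `K`. -/
def autRestrict {G : Type*} [Group G] (K : Subgroup G) [K.Characteristic] (ψ : G ≃* G) :
    K →* K :=
  (ψ.toMonoidHom.domRestrict K).codRestrict K (fun x => by
    have h : K.comap ψ.toMonoidHom = K :=
      (Subgroup.characteristic_iff_comap_eq.mp inferInstance) ψ
    have hx : (x : G) ∈ K.comap ψ.toMonoidHom := by rw [h]; exact x.2
    exact Subgroup.mem_comap.mp hx)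

/-- The `ℚ`-linear map on `V = ℚ ⊗_ℤ K^{ab}` induced by an automorphism `ψ` of `G`. -/
noncomputable def autLin {G : Type*} [Group G] (K : Subgroup G) [K.Characteristic]
    (ψ : G ≃* G) :
    (ℚ ⊗[ℤ] Additive (Abelianization K)) →ₗ[ℚ] (ℚ ⊗[ℤ] Additive (Abelianization K)) :=
  LinearMap.baseChange ℚ
    ((MonoidHom.toAdditive (Abelianization.map (autRestrict K ψ))).toIntLinearMap)

/-- The subspace `V^Γ` of vectors fixed by the conjugation action of every element. -/
noncomputable def fixedSubmodule {G : Type*} [Group G] (K : Subgroup G) [K.Normal] :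
    Submodule ℚ (ℚ ⊗[ℤ] Additive (Abelianization K)) where
  carrier := {v | ∀ f : G, conjLin K f v = v}
  add_mem' := by
    intro a b ha hb f
    rw [map_add, ha f, hb f]
  zero_mem' := fun f => map_zero _
  smul_mem' := by
    intro c a ha f
    rw [map_smul, ha f]

set_option linter.unusedSectionVars false

section Helpers

variable {A B C : Type*} [CommGroup A] [CommGroup B] [CommGroup C]

/-- The `ℚ`-linear map on `ℚ ⊗ A` induced by a homomorphism of abelian groups. -/
noncomputable def homLin (χ : A →* B) :
    (ℚ ⊗[ℤ] Additive A) →ₗ[ℚ] (ℚ ⊗[ℤ] Additive B) :=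
  LinearMap.baseChange ℚ ((MonoidHom.toAdditive χ).toIntLinearMap)

@[simp] lemma homLin_tmul (χ : A →* B) (r : ℚ) (x : Additive A) :
    homLin χ (r ⊗ₜ x) = r ⊗ₜ Additive.ofMul (χ x.toMul) := by
  simp [homLin]

lemma qtensor_ext {M N : Type*} [AddCommGroup M] [AddCommGroup N] [Module ℚ N]
    {f g : (ℚ ⊗[ℤ] M) →ₗ[ℚ] N}
    (h : ∀ x : M, f ((1 : ℚ) ⊗ₜ x) = g ((1 : ℚ) ⊗ₜ x)) : f = g := by
  apply LinearMap.ext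
  intro v
  induction v with
  | zero => simp
  | tmul r x =>
      have hrx : (r ⊗ₜ x : ℚ ⊗[ℤ] M) = r • ((1 : ℚ) ⊗ₜ x) := by
        rw [TensorProduct.smul_tmul', smul_eq_mul, mul_one]
      rw [hrx, map_smul, map_smul, h]
  | add x y hx hy => rw [map_add, map_add, hx, hy]

lemma homLin_comp (χ₁ : B →* C) (χ₂ : A →* B) :
    homLin (χ₁.comp χ₂) = (homLin χ₁).comp (homLin χ₂) :=
  qtensor_ext fun x => by simp

lemma homLin_id : homLin (MonoidHom.id A) = LinearMap.id :=
  qtensor_ext fun x => by simp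

lemma homLin_congr {χ₁ χ₂ : A →* B} (h : χ₁ = χ₂) : homLin χ₁ = homLin χ₂ := by rw [h]

/-- An integer-valued character gives a `ℚ`-valued `ℤ`-linear functional on
`ℚ ⊗ K^{ab}` which can be used to distinguish vectors. -/
noncomputable def evalTensor {H : Type*} [Group H] (χ : H →* Multiplicative ℤ) :
    (ℚ ⊗[ℤ] Additive (Abelianization H)) →ₗ[ℤ] ℚ :=
  TensorProduct.lift (LinearMap.mk₂ ℤ
    (fun (r : ℚ) (x : Additive (Abelianization H)) =>
      r * ((MonoidHom.toAdditiveLeft (Abelianization.lift χ) x : ℤ) : ℚ))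
    (fun a b x => by push_cast; ring)
    (fun c a x => by rw [zsmul_eq_mul, zsmul_eq_mul]; push_cast; ring)
    (fun a x y => by rw [map_add]; push_cast; ring)
    (fun c a x => by rw [map_zsmul, zsmul_eq_mul, zsmul_eq_mul]; push_cast; ring))

@[simp] lemma evalTensor_tmul {H : Type*} [Group H] (χ : H →* Multiplicative ℤ)
    (r : ℚ) (h : H) :
    evalTensor χ (r ⊗ₜ Additive.ofMul (Abelianization.of h))
      = r * ((Multiplicative.toAdd (χ h) : ℤ) : ℚ) := by
  erw [evalTensor, TensorProduct.lift.tmul]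
  rfl

end Helpers
section ConjLemmas

variable {G : Type*} [Group G] (K : Subgroup G) [K.Normal]

lemma conjAbHom_of (f : G) (x : K) :
    conjAbHom K f (Abelianization.of x) = Abelianization.of (MulAut.conjNormal f x) := by
  simp [conjAbHom]

lemma conjLin_eq_homLin (f : G) : conjLin K f = homLin (conjAbHom K f) := rfl

lemma conjAbHom_comp (f g : G) :
    (conjAbHom K f).comp (conjAbHom K g) = conjAbHom K (f * g) := by
  apply Abelianization.hom_ext
  ext x
  simp only [MonoidHom.comp_apply, conjAbHom_of]
  congr 1
  ext
  simp [mul_assoc]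

lemma conjAbHom_of_mem {k : G} (hk : k ∈ K) :
    conjAbHom K k = MonoidHom.id (Abelianization K) := by
  apply Abelianization.hom_ext
  ext x
  have h : MulAut.conjNormal k x = ⟨k, hk⟩ * x * (⟨k, hk⟩ : K)⁻¹ := by
    ext; simp
  show conjAbHom K k (Abelianization.of x) = Abelianization.of x
  rw [conjAbHom_of, h]
  rw [map_mul, map_mul, map_inv, mul_comm (Abelianization.of ⟨k, hk⟩) (Abelianization.of x),
    mul_inv_cancel_right]

lemma conjLin_mul (f g : G) :
    conjLin K (f * g) = (conjLin K f).comp (conjLin K g) := by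
  rw [conjLin_eq_homLin, conjLin_eq_homLin, conjLin_eq_homLin, ← conjAbHom_comp, homLin_comp]

lemma conjLin_of_mem {k : G} (hk : k ∈ K) : conjLin K k = LinearMap.id := by
  rw [conjLin_eq_homLin, conjAbHom_of_mem K hk, homLin_id]

lemma conjLin_congr {f g : G}
    (h : (QuotientGroup.mk f : G ⧸ K) = QuotientGroup.mk g) :
    conjLin K f = conjLin K g := by
  have hm : f⁻¹ * g ∈ K := (QuotientGroup.eq).mp h
  have : g = f * (f⁻¹ * g) := by group
  rw [this, conjLin_mul, conjLin_of_mem K hm, LinearMap.comp_id]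

end ConjLemmas

section Translation

variable (Q : Type*) [Group Q]

/-- Left-translation action of `Q` on `Q → Multiplicative ℤ`. -/
def traAut : Q →* MulAut (Q → Multiplicative ℤ) :=
  MonoidHom.mk'
    (fun γ =>
      { toFun := fun w x => w (γ⁻¹ * x)
        invFun := fun w x => w (γ * x)
        left_inv := fun w => funext fun x => by simp
        right_inv := fun w => funext fun x => by simp
        map_mul' := fun w w' => rfl })
    (fun γ δ => by
      apply MulEquiv.ext
      intro w
      funext x
      show w ((γ * δ)⁻¹ * x) = w (δ⁻¹ * (γ⁻¹ * x))
      rw [mul_inv_rev, mul_assoc])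

@[simp] lemma traAut_apply (γ : Q) (w : Q → Multiplicative ℤ) (x : Q) :
    traAut Q γ w x = w (γ⁻¹ * x) := rfl

lemma traAut_mulSingle [DecidableEq Q] (γ g : Q) (c : Multiplicative ℤ) :
    traAut Q γ (Pi.mulSingle g c) = Pi.mulSingle (γ * g) c := by
  funext x
  simp only [traAut_apply, Pi.mulSingle_apply]
  congr 1
  apply propext
  constructor
  · rintro rfl; rw [mul_inv_cancel_left]
  · rintro rfl; rw [inv_mul_cancel_left]

end Translation
section Fox

open scoped Classical

variable {d : ℕ} (K : Subgroup (FreeGroup (Fin d))) [K.Normal]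

/-- A Fox-derivative-style cocycle map into a semidirect product: it records the
positions (relative to the cosets of `K`) of occurrences of the letter `c`. -/
noncomputable def foxFull (c : Fin d) :
    FreeGroup (Fin d) →*
      ((FreeGroup (Fin d) ⧸ K → Multiplicative ℤ)
        ⋊[traAut (FreeGroup (Fin d) ⧸ K)] (FreeGroup (Fin d) ⧸ K)) :=
  FreeGroup.lift fun i =>
    ⟨if i = c then Pi.mulSingle (1 : FreeGroup (Fin d) ⧸ K) (Multiplicative.ofAdd (1 : ℤ))
        else 1,
      QuotientGroup.mk (FreeGroup.of i)⟩

lemma foxFull_right (c : Fin d) (g : FreeGroup (Fin d)) :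
    (foxFull K c g).right = QuotientGroup.mk g := by
  have h : (SemidirectProduct.rightHom.comp (foxFull K c)) = QuotientGroup.mk' K := by
    apply FreeGroup.ext_hom
    intro i
    simp [foxFull]
  exact DFunLike.congr_fun h g

lemma foxFull_right_one (c : Fin d) (k : K) :
    (foxFull K c (k : FreeGroup (Fin d))).right = 1 := by
  rw [foxFull_right]
  exact (QuotientGroup.eq_one_iff _).mpr k.2

/-- The Fox derivative with respect to the letter `c`, restricted to `K`, is a
homomorphism `K →* (F⧸K → ℤ)`. -/
noncomputable def foxDer (c : Fin d) :
    K →* (FreeGroup (Fin d) ⧸ K → Multiplicative ℤ) where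
  toFun k := (foxFull K c (k : FreeGroup (Fin d))).left
  map_one' := by simp
  map_mul' k k' := by
    rw [Subgroup.coe_mul, map_mul, SemidirectProduct.mul_left, foxFull_right_one,
      map_one, MulAut.one_apply]

lemma semidirect_conj_left {N G : Type*} [CommGroup N] [Group G] {φ : G →* MulAut N}
    (u w : N ⋊[φ] G) (hw : w.right = 1) :
    (u * w * u⁻¹).left = φ u.right w.left := by
  rw [SemidirectProduct.mul_left, SemidirectProduct.mul_left, SemidirectProduct.inv_left,
    SemidirectProduct.mul_right, hw, mul_one]
  have h1 : φ u.right ((φ u.right⁻¹) u.left⁻¹) = u.left⁻¹ := by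
    rw [map_inv φ u.right, MulAut.inv_def, MulEquiv.apply_symm_apply]
  rw [h1, mul_comm u.left (φ u.right w.left), mul_inv_cancel_right]

lemma foxDer_conj (c : Fin d) (f : FreeGroup (Fin d)) (k : K) :
    foxDer K c (MulAut.conjNormal f k)
      = traAut (FreeGroup (Fin d) ⧸ K) (QuotientGroup.mk f) (foxDer K c k) := by
  have hcoe : ((MulAut.conjNormal f k : K) : FreeGroup (Fin d)) = f * (k : FreeGroup (Fin d)) * f⁻¹ := rfl
  show (foxFull K c ((MulAut.conjNormal f k : K) : FreeGroup (Fin d))).left = _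
  rw [hcoe, map_mul, map_mul, map_inv]
  rw [semidirect_conj_left _ _ (foxFull_right_one K c k), foxFull_right]
  rfl

end Fox
section FoxCompute

open scoped Classical

variable {d : ℕ} (K : Subgroup (FreeGroup (Fin d))) [K.Normal]

lemma foxFull_of_self_left (c : Fin d) :
    (foxFull K c (FreeGroup.of c)).left
      = Pi.mulSingle (1 : FreeGroup (Fin d) ⧸ K) (Multiplicative.ofAdd (1 : ℤ)) := by
  simp [foxFull]

lemma foxFull_of_ne_left (c i : Fin d) (h : i ≠ c) :
    (foxFull K c (FreeGroup.of i)).left = 1 := by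
  simp [foxFull, h]

lemma foxFull_zpow_ne_left (c i : Fin d) (h : i ≠ c) (t : ℤ) :
    (foxFull K c (FreeGroup.of i ^ t)).left = 1 := by
  have h1 : foxFull K c (FreeGroup.of i)
      = SemidirectProduct.inr (QuotientGroup.mk (FreeGroup.of i)) := by
    apply SemidirectProduct.ext
    · rw [foxFull_of_ne_left K c i h, SemidirectProduct.left_inr]
    · rw [foxFull_right, SemidirectProduct.right_inr]
  rw [map_zpow, h1, ← map_zpow, SemidirectProduct.left_inr]

lemma foxFull_pow_self_left (c : Fin d) (n : ℕ) :
    (foxFull K c (FreeGroup.of c ^ n)).left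
      = ∏ i ∈ Finset.range n,
          Pi.mulSingle ((QuotientGroup.mk (FreeGroup.of c) : FreeGroup (Fin d) ⧸ K) ^ i)
            (Multiplicative.ofAdd (1 : ℤ)) := by
  induction n with
  | zero => simp
  | succ n ih =>
      rw [pow_succ, map_mul, SemidirectProduct.mul_left, ih, foxFull_right,
        Finset.prod_range_succ, foxFull_of_self_left]
      congr 1
      have : (QuotientGroup.mk (FreeGroup.of c ^ n) : FreeGroup (Fin d) ⧸ K)
          = (QuotientGroup.mk (FreeGroup.of c) : FreeGroup (Fin d) ⧸ K) ^ n := by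
        exact (QuotientGroup.mk' K).map_pow _ n
      rw [this, traAut_mulSingle, mul_one]

lemma prod_mulSingle_eval_one {Q : Type*} [Group Q] [DecidableEq Q] (α : Q) (hα : IsOfFinOrder α) :
    (∏ i ∈ Finset.range (orderOf α),
        (Pi.mulSingle (α ^ i) (Multiplicative.ofAdd (1 : ℤ)) : Q → Multiplicative ℤ)) 1
      = Multiplicative.ofAdd (1 : ℤ) := by
  rw [Finset.prod_apply]
  rw [Finset.prod_eq_single_of_mem 0 (Finset.mem_range.mpr hα.orderOf_pos)
    (fun i hi hi0 => by
      rw [Pi.mulSingle_apply, if_neg]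
      intro h
      have hdvd : orderOf α ∣ i := orderOf_dvd_of_pow_eq_one h.symm
      exact hi0 (Nat.eq_zero_of_dvd_of_lt hdvd (Finset.mem_range.mp hi)))]
  rw [pow_zero, Pi.mulSingle_apply, if_pos rfl]

lemma prod_mulSingle_eval_notmem {Q : Type*} [Group Q] [DecidableEq Q] (α : Q) {γ : Q}
    (hγ : γ ∉ Subgroup.zpowers α) (n : ℕ) :
    (∏ i ∈ Finset.range n,
        (Pi.mulSingle (α ^ i) (Multiplicative.ofAdd (1 : ℤ)) : Q → Multiplicative ℤ)) γ
      = 1 := by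
  rw [Finset.prod_apply]
  apply Finset.prod_eq_one
  intro i _
  rw [Pi.mulSingle_apply, if_neg]
  intro h
  exact hγ (h ▸ Subgroup.npow_mem_zpowers α i)

end FoxCompute
section Master

open scoped Classical

variable {d : ℕ} (K : Subgroup (FreeGroup (Fin d))) [K.Normal]

lemma exists_gen_not_mem (hK : K ≠ ⊤) : ∃ j : Fin d, FreeGroup.of j ∉ K := by
  by_contra h
  push_neg at h
  apply hK
  rw [Subgroup.eq_top_iff']
  intro x
  induction x using FreeGroup.induction_on with
  | C1 => exact one_mem K
  | of i => exact h i
  | inv_of i _ => exact inv_mem (h i)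
  | mul x y hx hy => exact mul_mem hx hy

lemma exists_conj_ne [K.FiniteIndex] (hd : 2 ≤ d) (hK : K ≠ ⊤) :
    ∃ (f : FreeGroup (Fin d)) (k : K) (χ : K →* Multiplicative ℤ),
      χ (MulAut.conjNormal f k) ≠ χ k := by
  obtain ⟨j, hj⟩ := exists_gen_not_mem K hK
  set α : FreeGroup (Fin d) ⧸ K := QuotientGroup.mk (FreeGroup.of j) with hαdef
  have hα1 : α ≠ 1 := fun h => hj ((QuotientGroup.eq_one_iff _).mp h)
  have hofAdd : (Multiplicative.ofAdd (1 : ℤ)) ≠ 1 := by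
    intro h
    simpa using congrArg Multiplicative.toAdd h
  by_cases hcyc : ∀ γ : FreeGroup (Fin d) ⧸ K, γ ∈ Subgroup.zpowers α
  · -- Case B: the quotient is cyclic, generated by α.  Use another letter.
    have hd1 : (0 : ℕ) < d := by omega
    have hd2 : (1 : ℕ) < d := by omega
    obtain ⟨c, hc⟩ : ∃ c : Fin d, c ≠ j := by
      by_cases h0 : j = ⟨0, hd1⟩
      · exact ⟨⟨1, hd2⟩, by rw [h0]; intro h; simpa using congrArg Fin.val h⟩
      · exact ⟨⟨0, hd1⟩, fun h => h0 (h ▸ rfl)⟩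
    obtain ⟨t, ht⟩ := Subgroup.mem_zpowers_iff.mp (hcyc (QuotientGroup.mk (FreeGroup.of c)))
    have hkmem : FreeGroup.of c * FreeGroup.of j ^ (-t) ∈ K := by
      rw [← QuotientGroup.eq_one_iff]
      have hz : (QuotientGroup.mk (FreeGroup.of j ^ (-t)) : FreeGroup (Fin d) ⧸ K)
          = α ^ (-t) := (QuotientGroup.mk' K).map_zpow _ _
      rw [QuotientGroup.mk_mul, hz, ← ht, ← zpow_add]
      simp
    set k : K := ⟨FreeGroup.of c * FreeGroup.of j ^ (-t), hkmem⟩ with hkdef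
    have hD : foxDer K c k
        = Pi.mulSingle (1 : FreeGroup (Fin d) ⧸ K) (Multiplicative.ofAdd (1 : ℤ)) := by
      show (foxFull K c (FreeGroup.of c * FreeGroup.of j ^ (-t))).left = _
      rw [map_mul, SemidirectProduct.mul_left, foxFull_zpow_ne_left K c j hc.symm,
        foxFull_of_self_left]
      simp
    refine ⟨FreeGroup.of j, k, (Pi.evalMonoidHom _ α).comp (foxDer K c), ?_⟩
    rw [MonoidHom.comp_apply, MonoidHom.comp_apply, foxDer_conj, hD,
      Pi.evalMonoidHom_apply, Pi.evalMonoidHom_apply, traAut_apply, ← hαdef,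
      inv_mul_cancel, Pi.mulSingle_apply, Pi.mulSingle_apply, if_pos rfl, if_neg hα1]
    exact hofAdd
  · -- Case A: some γ is not a power of α.
    push_neg at hcyc
    obtain ⟨γ, hγ⟩ := hcyc
    have hfin : Finite (FreeGroup (Fin d) ⧸ K) := inferInstance
    have hford : IsOfFinOrder α := isOfFinOrder_of_finite α
    have hkmem : FreeGroup.of j ^ orderOf α ∈ K := by
      rw [← QuotientGroup.eq_one_iff]
      have : (QuotientGroup.mk (FreeGroup.of j ^ orderOf α) : FreeGroup (Fin d) ⧸ K)
          = α ^ orderOf α := (QuotientGroup.mk' K).map_pow _ _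
      rw [this, pow_orderOf_eq_one]
    set k : K := ⟨FreeGroup.of j ^ orderOf α, hkmem⟩ with hkdef
    obtain ⟨f, hf⟩ : ∃ f, (QuotientGroup.mk f : FreeGroup (Fin d) ⧸ K) = γ :=
      ⟨γ.out, QuotientGroup.out_eq' γ⟩
    have hD : foxDer K j k
        = ∏ i ∈ Finset.range (orderOf α),
            (Pi.mulSingle (α ^ i) (Multiplicative.ofAdd (1 : ℤ)) :
              (FreeGroup (Fin d) ⧸ K) → Multiplicative ℤ) := by
      show (foxFull K j (FreeGroup.of j ^ orderOf α)).left = _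
      rw [foxFull_pow_self_left]
    refine ⟨f, k, (Pi.evalMonoidHom _ γ).comp (foxDer K j), ?_⟩
    rw [MonoidHom.comp_apply, MonoidHom.comp_apply, foxDer_conj, hD, hf,
      Pi.evalMonoidHom_apply, Pi.evalMonoidHom_apply, traAut_apply, inv_mul_cancel,
      prod_mulSingle_eval_one α hford, prod_mulSingle_eval_notmem α hγ]
    exact hofAdd

end Master
section FixedPieces

variable {G : Type*} [Group G] (K : Subgroup G) [K.Normal]

lemma mem_fixedSubmodule {v : ℚ ⊗[ℤ] Additive (Abelianization K)} :
    v ∈ fixedSubmodule K ↔ ∀ f : G, conjLin K f v = v := Iff.rfl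

lemma coe_autRestrict [K.Characteristic] (ψ : G ≃* G) (x : K) :
    ((autRestrict K ψ x : K) : G) = ψ x := rfl

lemma autLin_eq_homLin [K.Characteristic] (ψ : G ≃* G) :
    autLin K ψ = homLin (Abelianization.map (autRestrict K ψ)) := rfl

lemma conjAb_autAb_comm [K.Characteristic] (ψ : G ≃* G) (f : G) :
    (conjAbHom K f).comp (Abelianization.map (autRestrict K ψ))
      = (Abelianization.map (autRestrict K ψ)).comp (conjAbHom K (ψ.symm f)) := by
  apply Abelianization.hom_ext
  ext x
  simp only [MonoidHom.comp_apply, Abelianization.map_of, conjAbHom_of]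
  congr 1
  ext
  rw [coe_autRestrict]
  show (f : G) * _ * f⁻¹ = ψ ((ψ.symm f) * (x : G) * (ψ.symm f)⁻¹)
  rw [map_mul, map_mul, map_inv, MulEquiv.apply_symm_apply]
  rfl

lemma conjLin_autLin_comm [K.Characteristic] (ψ : G ≃* G) (f : G) :
    (conjLin K f).comp (autLin K ψ) = (autLin K ψ).comp (conjLin K (ψ.symm f)) := by
  rw [conjLin_eq_homLin, conjLin_eq_homLin, autLin_eq_homLin, ← homLin_comp, ← homLin_comp,
    conjAb_autAb_comm]

lemma autLin_mem_fixed [K.Characteristic] (ψ : G ≃* G)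
    {v : ℚ ⊗[ℤ] Additive (Abelianization K)} (hv : v ∈ fixedSubmodule K) :
    autLin K ψ v ∈ fixedSubmodule K := by
  rw [mem_fixedSubmodule]
  intro f
  have h := DFunLike.congr_fun (conjLin_autLin_comm K ψ f) v
  simp only [LinearMap.comp_apply] at h
  rw [h, (mem_fixedSubmodule K).mp hv (ψ.symm f)]

end FixedPieces

section NeTop

variable {d : ℕ} (K : Subgroup (FreeGroup (Fin d))) [K.Normal] [K.FiniteIndex]

lemma fixedSubmodule_ne_top (hd : 2 ≤ d) (hK : K ≠ ⊤) : fixedSubmodule K ≠ ⊤ := by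
  obtain ⟨f, k, χ, hne⟩ := exists_conj_ne K hd hK
  intro htop
  have hv : conjLin K f ((1 : ℚ) ⊗ₜ Additive.ofMul (Abelianization.of k))
      = (1 : ℚ) ⊗ₜ Additive.ofMul (Abelianization.of k) :=
    (mem_fixedSubmodule K).mp (htop ▸ Submodule.mem_top) f
  rw [conjLin_eq_homLin, homLin_tmul] at hv
  have h2 : ((1 : ℚ) ⊗ₜ[ℤ] Additive.ofMul (Abelianization.of (MulAut.conjNormal f k)) :
      ℚ ⊗[ℤ] Additive (Abelianization K))
      = (1 : ℚ) ⊗ₜ[ℤ] Additive.ofMul (Abelianization.of k) := by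
    rw [← conjAbHom_of]
    exact hv
  have h3 := congrArg (evalTensor χ) h2
  rw [evalTensor_tmul, evalTensor_tmul, one_mul, one_mul] at h3
  exact hne (Multiplicative.toAdd.injective (by exact_mod_cast h3))

lemma fixedSubmodule_ne_bot (hd : 1 ≤ d) : fixedSubmodule K ≠ ⊥ := by
  classical
  letI : Fintype (FreeGroup (Fin d) ⧸ K) := Fintype.ofFinite _
  set j : Fin d := ⟨0, hd⟩ with hj
  set a : FreeGroup (Fin d) := FreeGroup.of j with ha
  set α : FreeGroup (Fin d) ⧸ K := QuotientGroup.mk a with hα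
  have hford : IsOfFinOrder α := isOfFinOrder_of_finite α
  have hkmem : a ^ orderOf α ∈ K := by
    rw [← QuotientGroup.eq_one_iff]
    have hmk : (QuotientGroup.mk (a ^ orderOf α) : FreeGroup (Fin d) ⧸ K) = α ^ orderOf α :=
      (QuotientGroup.mk' K).map_pow _ _
    rw [hmk, pow_orderOf_eq_one]
  set k0 : K := ⟨a ^ orderOf α, hkmem⟩ with hk0
  set v : ℚ ⊗[ℤ] Additive (Abelianization K) :=
    (1 : ℚ) ⊗ₜ Additive.ofMul (Abelianization.of k0) with hv
  set w := ∑ q : FreeGroup (Fin d) ⧸ K, conjLin K (Quotient.out q) v with hw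
  have hwfix : w ∈ fixedSubmodule K := by
    rw [mem_fixedSubmodule]
    intro f
    rw [hw, map_sum]
    have h1 : ∀ q : FreeGroup (Fin d) ⧸ K,
        conjLin K f (conjLin K (Quotient.out q) v)
          = conjLin K (Quotient.out (QuotientGroup.mk f * q)) v := by
      intro q
      rw [← LinearMap.comp_apply, ← conjLin_mul]
      refine DFunLike.congr_fun (conjLin_congr K ?_) v
      rw [QuotientGroup.mk_mul, QuotientGroup.out_eq', QuotientGroup.out_eq']
    simp_rw [h1]
    exact Fintype.sum_equiv (Equiv.mulLeft (QuotientGroup.mk f)) _ _ (fun q => rfl)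
  have hθconj : ∀ g : FreeGroup (Fin d),
      (homLin (Abelianization.map K.subtype)).comp (conjLin K g)
        = homLin (Abelianization.map K.subtype) := by
    intro g
    rw [conjLin_eq_homLin, ← homLin_comp]
    apply homLin_congr
    apply Abelianization.hom_ext
    ext x
    simp only [MonoidHom.comp_apply, conjAbHom_of, Abelianization.map_of]
    show Abelianization.of ((MulAut.conjNormal g x : K) : FreeGroup (Fin d)) = _
    rw [show ((MulAut.conjNormal g x : K) : FreeGroup (Fin d)) = g * (x : FreeGroup (Fin d)) * g⁻¹
      from rfl]
    rw [map_mul, map_mul, map_inv,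
      mul_comm (Abelianization.of g) (Abelianization.of (x : FreeGroup (Fin d))),
      mul_inv_cancel_right]
    rfl
  have hθv : homLin (Abelianization.map K.subtype) v
      = (1 : ℚ) ⊗ₜ Additive.ofMul (Abelianization.of (a ^ orderOf α)) := by
    rw [hv, homLin_tmul]
    rfl
  have hθw : homLin (Abelianization.map K.subtype) w
      = (Fintype.card (FreeGroup (Fin d) ⧸ K)) •
          ((1 : ℚ) ⊗ₜ Additive.ofMul (Abelianization.of (a ^ orderOf α))) := by
    rw [hw, map_sum]
    rw [Finset.sum_congr rfl (fun q _ => by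
      rw [← LinearMap.comp_apply, hθconj, hθv])]
    rw [Finset.sum_const, Finset.card_univ]
  set χF : FreeGroup (Fin d) →* Multiplicative ℤ :=
    FreeGroup.lift (fun _ => Multiplicative.ofAdd (1 : ℤ)) with hχF
  have heval : evalTensor χF (homLin (Abelianization.map K.subtype) w)
      = (Fintype.card (FreeGroup (Fin d) ⧸ K) : ℚ) * (orderOf α : ℚ) := by
    rw [hθw, map_nsmul, evalTensor_tmul, one_mul]
    have hχ : Multiplicative.toAdd (χF (a ^ orderOf α)) = ((orderOf α : ℤ)) := by
      rw [map_pow, toAdd_pow, hχF, ha, FreeGroup.lift_apply_of]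
      simp
    rw [hχ, nsmul_eq_mul]
    norm_num
  have hcard : (Fintype.card (FreeGroup (Fin d) ⧸ K) : ℚ) ≠ 0 :=
    Nat.cast_ne_zero.mpr Fintype.card_ne_zero
  have hp : ((orderOf α : ℚ)) ≠ 0 := Nat.cast_ne_zero.mpr hford.orderOf_pos.ne'
  have hwne : w ≠ 0 := by
    intro h0
    rw [h0, map_zero, map_zero] at heval
    exact (mul_ne_zero hcard hp) heval.symm
  intro hbot
  rw [hbot] at hwfix
  exact hwne ((Submodule.mem_bot ℚ).mp hwfix)

end NeTop
/-- Let `K` be a characteristic finite-index subgroup of a free group `F`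
of rank `d ≥ 2`, `Γ = F/K`, `V = ℚ ⊗_ℤ K^{ab}` with the conjugation `Γ`-action (given by
`conjLin K f` for `f : F`), and `ψ` an automorphism of `F`.  If the only subspaces of
`V` invariant under both `ψ` and every element of `Γ` are `0` and `V`, then `Γ` is
trivial (`K = ⊤`).  Moreover, if `Γ` is nontrivial then the subspace `V^Γ` of
`Γ`-fixed vectors is nonzero, proper, and invariant under the map induced by every
automorphism of `F`. -/
theorem irreducible_joint_action_implies_trivial_deck (d : ℕ) (hd : 2 ≤ d)
    (K : Subgroup (FreeGroup (Fin d))) [K.Characteristic] [K.FiniteIndex]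
    (ψ : FreeGroup (Fin d) ≃* FreeGroup (Fin d)) :
    ((∀ W : Submodule ℚ (ℚ ⊗[ℤ] Additive (Abelianization K)),
        (∀ v ∈ W, autLin K ψ v ∈ W) →
        (∀ (f : FreeGroup (Fin d)), ∀ v ∈ W, conjLin K f v ∈ W) →
        W = ⊥ ∨ W = ⊤) → K = ⊤) ∧
    (K ≠ ⊤ →
      fixedSubmodule K ≠ ⊥ ∧ fixedSubmodule K ≠ ⊤ ∧
      ∀ φ : FreeGroup (Fin d) ≃* FreeGroup (Fin d),
        ∀ v ∈ fixedSubmodule K, autLin K φ v ∈ fixedSubmodule K) := by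
  constructor
  · intro hirr
    by_contra hK
    have h1 : ∀ v ∈ fixedSubmodule K, autLin K ψ v ∈ fixedSubmodule K :=
      fun v hv => autLin_mem_fixed K ψ hv
    have h2 : ∀ (f : FreeGroup (Fin d)), ∀ v ∈ fixedSubmodule K,
        conjLin K f v ∈ fixedSubmodule K := by
      intro f v hv
      rw [(mem_fixedSubmodule K).mp hv f]
      exact hv
    rcases hirr (fixedSubmodule K) h1 h2 with h | h
    · exact fixedSubmodule_ne_bot K (by omega) h
    · exact fixedSubmodule_ne_top K hd hK h
  · intro hK
    exact ⟨fixedSubmodule_ne_bot K (by omega), fixedSubmodule_ne_top K hd hK,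
      fun φ v hv => autLin_mem_fixed K φ hv⟩
end
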